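/- arXiv:math/0409146 — 4 statements merged into one kernel-verified Lean document; each statement's English description precedes it below -/
import Mathlib

section
/- Proposition 1: The following two statements are equivalent: (KL) for every group G (in a fixed universe) and every element w of G ∗ ⟨t⟩∞, if G is nontrivial then G̃ = (G ∗ ⟨t⟩∞)/⟨⟨w⟩⟩ is nontrivial; (KLs) for every group G (in the same universe) and every element w of G ∗ ⟨t⟩∞, if G is not nonabelian simple then G̃ is not nonabelian simple. -/
open Monoid

/-- `G ∗ ⟨t⟩∞`: the free product of `G` with an infinite cyclic group. -/
abbrev GZ (G : Type*) [Group G] := Coprod G (FreeGroup Unit)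

/-- The generator `t` of the infinite cyclic factor. -/
def tGen (G : Type*) [Group G] : GZ G := Coprod.inr (FreeGroup.of ())

/-- `G̃ = (G ∗ ⟨t⟩∞)/⟨⟨w⟩⟩`. -/
abbrev Gtilde (G : Type*) [Group G] (w : GZ G) :=
  GZ G ⧸ Subgroup.normalClosure {w}

/-- The natural map `G → G̃`. -/
def natMap (G : Type*) [Group G] (w : GZ G) : G →* Gtilde G w :=
  (QuotientGroup.mk' (Subgroup.normalClosure {w})).comp Coprod.inl

/-- The exponent sum homomorphism `G ∗ ⟨t⟩∞ → ℤ` killing `G` and sending `t` to `1`. -/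
def expSum (G : Type*) [Group G] : GZ G →* Multiplicative ℤ :=
  Coprod.lift 1 (FreeGroup.lift fun _ => Multiplicative.ofAdd (1 : ℤ))

universe u


set_option linter.unusedSectionVars false
set_option maxHeartbeats 1000000

namespace KLaux
open Equiv Cardinal
open scoped Classical
variable {G : Type u} [Group G]
abbrev T0 (G : Type u) : Type u := G × ULift.{u} ℤ
abbrev TT (G : Type u) : Type u := T0 G × ULift.{u} ℤ
abbrev XX (G : Type u) : Type u := G × TT G

def fib (lam : G → Equiv.Perm (TT G)) : Equiv.Perm (XX G) where
  toFun x := (x.1, lam x.1 x.2)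
  invFun x := (x.1, (lam x.1)⁻¹ x.2)
  left_inv x := by cases x; simp
  right_inv x := by cases x; simp

@[simp] lemma fib_apply (lam : G → Equiv.Perm (TT G)) (x : XX G) :
    fib lam x = (x.1, lam x.1 x.2) := rfl

lemma fib_mul (l m : G → Equiv.Perm (TT G)) :
    fib l * fib m = fib (fun g => l g * m g) := by
  apply Equiv.ext; intro x; cases x; simp [Equiv.Perm.mul_apply]

lemma fib_inv (l : G → Equiv.Perm (TT G)) :
    (fib l)⁻¹ = fib (fun g => (l g)⁻¹) := by
  apply Equiv.ext; intro x; cases x; rfl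

def cayHom : G →* Equiv.Perm (XX G) where
  toFun g :=
    { toFun := fun x => (g * x.1, x.2)
      invFun := fun x => (g⁻¹ * x.1, x.2)
      left_inv := fun x => by cases x; simp [mul_assoc]
      right_inv := fun x => by cases x; simp [mul_assoc] }
  map_one' := by apply Equiv.ext; intro x; cases x; simp
  map_mul' g h := by apply Equiv.ext; intro x; cases x; simp [Equiv.Perm.mul_apply, mul_assoc]

@[simp] lemma cayHom_apply (g : G) (x : XX G) : cayHom g x = (g * x.1, x.2) := rfl

lemma cayHom_inv_apply (g : G) (x : XX G) : (cayHom g)⁻¹ x = (g⁻¹ * x.1, x.2) := by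
  rw [← map_inv]; rfl

variable (k : G)

abbrev NC (k : G) : Subgroup (Equiv.Perm (XX G)) :=
  Subgroup.normalClosure {cayHom k}

lemma cay_mem_NC : cayHom k ∈ NC k :=
  Subgroup.subset_normalClosure (Set.mem_singleton _)

lemma conj_mem_NC {p : Equiv.Perm (XX G)} (hp : p ∈ NC k) (q : Equiv.Perm (XX G)) :
    q * p * q⁻¹ ∈ NC k :=
  Subgroup.normalClosure_normal.conj_mem p hp q

lemma boundary_mem (ρ : G → Equiv.Perm (TT G)) :
    fib (fun g => ρ g * (ρ (k⁻¹ * g))⁻¹) ∈ NC k := by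
  have h : fib (fun g => ρ g * (ρ (k⁻¹ * g))⁻¹)
      = (fib ρ * cayHom k * (fib ρ)⁻¹) * (cayHom k)⁻¹ := by
    apply Equiv.ext; intro x
    obtain ⟨g, t⟩ := x
    simp only [Equiv.Perm.mul_apply, fib_apply, fib_inv, cayHom_inv_apply, cayHom_apply,
      Equiv.Perm.mul_apply]
    simp [mul_assoc]
  rw [h]
  exact Subgroup.mul_mem _ (conj_mem_NC k (cay_mem_NC k) (fib ρ))
    (Subgroup.inv_mem _ (cay_mem_NC k))

def shTT : Equiv.Perm (TT G) where
  toFun x := (x.1, ⟨x.2.down + 1⟩)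
  invFun x := (x.1, ⟨x.2.down - 1⟩)
  left_inv x := by cases x; simp
  right_inv x := by cases x; simp

@[simp] lemma shTT_apply (x : TT G) : (shTT x : TT G) = (x.1, ⟨x.2.down + 1⟩) := rfl
lemma shTT_inv_apply (x : TT G) : ((shTT⁻¹ : Equiv.Perm (TT G)) x) = (x.1, ⟨x.2.down - 1⟩) := rfl

def half (ρ : Equiv.Perm (T0 G)) : Equiv.Perm (TT G) where
  toFun x := (if 0 ≤ x.2.down then ρ x.1 else x.1, x.2)
  invFun x := (if 0 ≤ x.2.down then ρ⁻¹ x.1 else x.1, x.2)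
  left_inv x := by cases x; dsimp only; split_ifs <;> simp_all
  right_inv x := by cases x; dsimp only; split_ifs <;> simp_all

@[simp] lemma half_apply (ρ : Equiv.Perm (T0 G)) (x : TT G) :
    half ρ x = (if 0 ≤ x.2.down then ρ x.1 else x.1, x.2) := rfl

lemma half_inv_apply (ρ : Equiv.Perm (T0 G)) (x : TT G) :
    (half ρ)⁻¹ x = (if 0 ≤ x.2.down then ρ⁻¹ x.1 else x.1, x.2) := rfl

def slab (ρ : Equiv.Perm (T0 G)) : Equiv.Perm (TT G) where
  toFun x := (if x.2.down = 0 then ρ x.1 else x.1, x.2)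
  invFun x := (if x.2.down = 0 then ρ⁻¹ x.1 else x.1, x.2)
  left_inv x := by cases x; dsimp only; split_ifs <;> simp_all
  right_inv x := by cases x; dsimp only; split_ifs <;> simp_all

@[simp] lemma slab_apply (ρ : Equiv.Perm (T0 G)) (x : TT G) :
    slab ρ x = (if x.2.down = 0 then ρ x.1 else x.1, x.2) := rfl

lemma half_conj (ρ : Equiv.Perm (T0 G)) :
    half ρ * shTT * (half ρ)⁻¹ * shTT⁻¹ = slab ρ := by
  apply Equiv.ext; intro x
  obtain ⟨t, ⟨n⟩⟩ := x
  simp only [Equiv.Perm.mul_apply, shTT_inv_apply, half_inv_apply, shTT_apply, half_apply,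
    slab_apply]
  have hn : n - 1 + 1 = n := by ring
  by_cases h0 : n = 0
  · subst h0; norm_num
  · by_cases h1 : 0 ≤ n - 1
    · have h2 : (0:ℤ) ≤ n := by omega
      simp [h1, h2, hn, h0, show (1:ℤ) ≤ n by omega]
    · have h2 : ¬ (0:ℤ) ≤ n := by omega
      simp [h1, h2, hn, h0, show ¬ (1:ℤ) ≤ n by omega]

/-- mirror level function -/
noncomputable def mirFun (Θ : Equiv.Perm (TT G)) : G → Equiv.Perm (TT G) :=
  fun g => if g = 1 then Θ else if g = k then Θ⁻¹ else 1

lemma mir_mem (hk : k ≠ 1) (Θ : Equiv.Perm (TT G)) : fib (mirFun k Θ) ∈ NC k := by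
  have h : mirFun k Θ = fun g =>
      (if g = 1 then Θ else 1) * ((if g = k then Θ else 1))⁻¹ := by
    funext g
    by_cases h1 : g = 1
    · subst h1
      have : (1:G) ≠ k := fun h => hk h.symm
      simp [mirFun, this]
    · by_cases h2 : g = k
      · subst h2; simp [mirFun, hk, h1]
      · simp [mirFun, h1, h2]
  have h2 : (fun g => (if g = 1 then Θ else 1) * ((if g = k then Θ else 1))⁻¹)
      = fun g => (fun x => if x = 1 then Θ else 1) g *
          ((fun x => if x = 1 then Θ else 1) (k⁻¹ * g))⁻¹ := by
    funext g
    have : k⁻¹ * g = 1 ↔ g = k := by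
      constructor
      · intro h; exact (inv_mul_eq_one.mp h).symm
      · intro h; subst h; simp
    by_cases hg : g = k
    · simp [hg, this]
    · have : ¬ (k⁻¹ * g = 1) := fun hc => hg (by rwa [inv_mul_eq_one, eq_comm] at hc)
      simp [hg, this]
  rw [h, h2]
  exact boundary_mem k _

/-- single slab level function -/
noncomputable def slabLevel (ρ : Equiv.Perm (T0 G)) : G → Equiv.Perm (TT G) :=
  fun g => if g = 1 then slab ρ else 1

lemma slab_mem (hk : k ≠ 1) (ρ : Equiv.Perm (T0 G)) : fib (slabLevel ρ) ∈ NC k := by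
  set a := fib (mirFun k (half ρ)) with ha
  have haN : a ∈ NC k := mir_mem k hk _
  set η := fib (G := G) (fun g => if g = 1 then shTT else 1) with hη
  have hbN : η * a * η⁻¹ ∈ NC k := conj_mem_NC k haN η
  have hcN : a * (η * a * η⁻¹)⁻¹ ∈ NC k :=
    Subgroup.mul_mem _ haN (Subgroup.inv_mem _ hbN)
  have key : a * (η * a * η⁻¹)⁻¹ = fib (slabLevel ρ) := by
    rw [ha, hη]
    simp only [mul_inv_rev, inv_inv, fib_inv, fib_mul]
    congr 1
    funext g
    by_cases h1 : g = 1
    · subst h1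
      have hne : (1:G) ≠ k := fun h => hk h.symm
      simp only [mirFun, slabLevel, if_pos rfl, if_neg hne]
      simp only [eq_self_iff_true, if_true]
      rw [← half_conj ρ]
      group
    · by_cases h2 : g = k
      · subst h2
        simp [mirFun, slabLevel, hk, h1]
      · simp [mirFun, slabLevel, h1, h2]
  rwa [key] at hcN

section Glue
variable {α : Type u}

/-- glue two bijections on a set and its complement into a permutation -/
noncomputable def glueEquiv (A B : Set α) (e₁ : ↥A ≃ ↥B) (e₂ : ↥(Aᶜ) ≃ ↥(Bᶜ)) : α ≃ α where
  toFun x := if h : x ∈ A then (e₁ ⟨x, h⟩ : α) else (e₂ ⟨x, h⟩ : α)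
  invFun y := if h : y ∈ B then (e₁.symm ⟨y, h⟩ : α) else (e₂.symm ⟨y, h⟩ : α)
  left_inv x := by
    by_cases h : x ∈ A
    · have hb : ((e₁ ⟨x, h⟩ : ↥B) : α) ∈ B := (e₁ ⟨x, h⟩).2
      simp only [dif_pos h, dif_pos hb]
      rw [show (⟨(e₁ ⟨x, h⟩ : ↥B), hb⟩ : ↥B) = e₁ ⟨x, h⟩ from rfl]
      simp
    · have hb : ((e₂ ⟨x, h⟩ : ↥(Bᶜ)) : α) ∉ B := (e₂ ⟨x, h⟩).2
      simp only [dif_neg h, dif_neg hb]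
      rw [show (⟨(e₂ ⟨x, h⟩ : ↥(Bᶜ)) , hb⟩ : ↥(Bᶜ)) = e₂ ⟨x, h⟩ from rfl]
      simp
  right_inv y := by
    by_cases h : y ∈ B
    · have hb : ((e₁.symm ⟨y, h⟩ : ↥A) : α) ∈ A := (e₁.symm ⟨y, h⟩).2
      simp only [dif_pos h, dif_pos hb]
      rw [show (⟨(e₁.symm ⟨y, h⟩ : ↥A), hb⟩ : ↥A) = e₁.symm ⟨y, h⟩ from rfl]
      simp
    · have hb : ((e₂.symm ⟨y, h⟩ : ↥(Aᶜ)) : α) ∉ A := (e₂.symm ⟨y, h⟩).2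
      simp only [dif_neg h, dif_neg hb]
      rw [show (⟨(e₂.symm ⟨y, h⟩ : ↥(Aᶜ)), hb⟩ : ↥(Aᶜ)) = e₂.symm ⟨y, h⟩ from rfl]
      simp

lemma glueEquiv_apply_mem {A B : Set α} (e₁ : ↥A ≃ ↥B) (e₂ : ↥(Aᶜ) ≃ ↥(Bᶜ)) {x : α}
    (hx : x ∈ A) : glueEquiv A B e₁ e₂ x = (e₁ ⟨x, hx⟩ : α) := dif_pos hx

lemma glueEquiv_symm_apply_mem {A B : Set α} (e₁ : ↥A ≃ ↥B) (e₂ : ↥(Aᶜ) ≃ ↥(Bᶜ)) {y : α}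
    (hy : y ∈ B) : (glueEquiv A B e₁ e₂).symm y = (e₁.symm ⟨y, hy⟩ : α) := dif_pos hy

end Glue

section Cards

lemma mk_TT_eq : #(TT G) = #(T0 G) := by
  have h1 : #(TT G) = #(T0 G) * #(ULift.{u} ℤ) := by
    rw [Cardinal.mk_prod, Cardinal.lift_id, Cardinal.lift_id]
  rw [h1]
  have h2 : #(ULift.{u} ℤ) = ℵ₀ := by simp [Cardinal.mk_uLift, Cardinal.mk_int]
  rw [h2]
  exact Cardinal.mul_eq_left (Cardinal.aleph0_le_mk _)
    (Cardinal.aleph0_le_mk _) (by simp [Cardinal.aleph0_ne_zero])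

lemma mk_XX_eq : #(XX G) = #(TT G) := by
  have h1 : #(XX G) = #G * #(TT G) := by
    rw [Cardinal.mk_prod, Cardinal.lift_id, Cardinal.lift_id]
  rw [h1]
  have hG : #G ≤ #(TT G) := Cardinal.mk_le_of_injective
    (f := fun g => ((g, (1:ULift.{u} ℤ)), (1:ULift.{u} ℤ))) (by
      intro a b hab
      simpa using congrArg (fun p => p.1.1) hab)
  rw [mul_comm]
  exact Cardinal.mul_eq_left (Cardinal.aleph0_le_mk _) hG
    (Cardinal.mk_ne_zero _)

lemma mk_XX_eq_T0 : #(XX G) = #(T0 G) := by rw [mk_XX_eq, mk_TT_eq]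

/-- the distinguished slice -/
def Sl (G : Type u) [Group G] : Set (XX G) := {x : XX G | x.1 = 1 ∧ x.2.2.down = 0}

/-- the slice is equivalent to `T0` -/
def slEquiv : T0 G ≃ ↥(Sl G) where
  toFun t := ⟨(1, (t, ⟨0⟩)), ⟨rfl, rfl⟩⟩
  invFun x := x.1.2.1
  left_inv t := rfl
  right_inv x := by
    obtain ⟨⟨g, t, n⟩, hg, hn⟩ := x
    simp only [Sl, Set.mem_setOf_eq] at hg hn
    subst hg
    apply Subtype.ext
    simp only
    ext <;> simp [hn]

lemma mk_Sl : #(↥(Sl G)) = #(XX G) := by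
  rw [← Cardinal.mk_congr (slEquiv (G := G)), mk_XX_eq_T0]

lemma mk_Sl_compl : #(↥((Sl G)ᶜ)) = #(XX G) := by
  apply le_antisymm (Cardinal.mk_set_le _)
  have : #(T0 G) ≤ #(↥((Sl G)ᶜ)) := by
    apply Cardinal.mk_le_of_injective (f := fun t => ⟨(1, (t, ⟨1⟩)), by
      simp [Sl]⟩)
    intro a b hab
    have h2 := congrArg Subtype.val hab
    simpa using congrArg (fun x : XX G => x.2.1) h2
  calc #(XX G) = #(T0 G) := mk_XX_eq_T0
    _ ≤ _ := this

end Cards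

section Colarge

/-- a permutation fixing the complement of the slice is a slab permutation -/
lemma eq_slabLevel_of_fixes {d : Equiv.Perm (XX G)} (hd : ∀ x, x ∉ Sl G → d x = x) :
    ∃ ρ : Equiv.Perm (T0 G), d = fib (slabLevel ρ) := by
  have hmaps : ∀ x : XX G, x ∈ Sl G ↔ d x ∈ Sl G := by
    intro x
    constructor
    · intro hx
      by_contra hdx
      have h1 : d (d x) = d x := hd _ hdx
      have h2 : d x = x := d.injective h1
      rw [h2] at hdx; exact hdx hx
    · intro hdx
      by_contra hx
      have h1 : d x = x := hd _ hx
      rw [h1] at hdx; exact hx hdx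
  set dP : Equiv.Perm ↥(Sl G) := d.subtypePerm (fun x => (hmaps x).symm) with hdP
  set ρ : Equiv.Perm (T0 G) := (slEquiv (G := G)).symm.permCongr dP with hρ
  have hρap : ∀ t : T0 G, ρ t = ((dP (slEquiv t)).1).2.1 := by
    intro t
    rw [hρ]
    rfl
  refine ⟨ρ, ?_⟩
  apply Equiv.ext
  intro x
  by_cases hx : x ∈ Sl G
  · obtain ⟨g, t, n⟩ := x
    obtain ⟨hg, hn⟩ := hx
    simp only at hg hn
    subst hg
    have hn0 : n = ⟨0⟩ := by cases n with | up m => exact congrArg ULift.up hn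
    subst hn0
    have hmem : ((1 : G), (t, (⟨0⟩ : ULift.{u} ℤ))) ∈ Sl G := ⟨rfl, rfl⟩
    have hdmem : d (1, (t, ⟨0⟩)) ∈ Sl G := (hmaps _).mp hmem
    have h1 : (d (1, (t, ⟨0⟩))).1 = 1 := hdmem.1
    have h2 : (d (1, (t, ⟨0⟩))).2.2.down = 0 := hdmem.2
    have hfib : fib (slabLevel ρ) ((1:G), (t, (⟨0⟩ : ULift.{u} ℤ)))
        = (1, (ρ t, ⟨0⟩)) := by
      simp [slabLevel]
    rw [hfib]
    have hρt : ρ t = (d (1, (t, ⟨0⟩))).2.1 := by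
      rw [hρap]
      rfl
    rw [hρt]
    have : d ((1:G), (t, (⟨0⟩: ULift.{u} ℤ)))
        = ((d (1, (t, ⟨0⟩))).1, ((d (1, (t, ⟨0⟩))).2.1, (d (1, (t, ⟨0⟩))).2.2)) := rfl
    rw [this, h1]
    congr 1
    congr 1
    cases hval : (d ((1:G), (t, (⟨0⟩: ULift.{u} ℤ)))).2.2
    rw [hval] at h2
    simp only at h2
    simp [h2]
  · rw [hd x hx]
    obtain ⟨g, t, n⟩ := x
    simp only [fib_apply, slabLevel]
    by_cases hg : g = 1
    · subst hg
      have hn : ¬ n.down = 0 := by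
        intro h; exact hx ⟨rfl, h⟩
      simp [hn]
    · simp [hg]

/-- membership of co-large permutations in the normal closure -/
lemma colarge_mem (k : G) (hk : k ≠ 1) (c : Equiv.Perm (XX G))
    (hc : #(↥({x : XX G | c x ≠ x}ᶜ)) = #(XX G)) : c ∈ NC k := by
  classical
  set B : Set (XX G) := {x : XX G | c x ≠ x} with hB
  have hBle : #(↥B) ≤ #(↥(Sl G)) := by
    rw [mk_Sl]; exact Cardinal.mk_set_le _
  obtain ⟨f⟩ := (Cardinal.le_def _ _).mp hBle
  set B' : Set (XX G) := Set.range (fun b : ↥B => ((f b : ↥(Sl G)) : XX G)) with hB'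
  have hB'sub : B' ⊆ Sl G := by
    rintro x ⟨b, rfl⟩; exact (f b).2
  have hinj : Function.Injective (fun b : ↥B => ((f b : ↥(Sl G)) : XX G)) := by
    intro a b hab
    exact f.injective (Subtype.ext hab)
  set e₁ : ↥B ≃ ↥B' := Equiv.ofInjective _ hinj with he₁
  have hcompl : #(↥(B'ᶜ)) = #(XX G) := by
    apply le_antisymm (Cardinal.mk_set_le _)
    calc #(XX G) = #(↥((Sl G)ᶜ)) := mk_Sl_compl.symm
      _ ≤ #(↥(B'ᶜ)) := Cardinal.mk_le_mk_of_subset (Set.compl_subset_compl.mpr hB'sub)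
  have hBc : #(↥(Bᶜ)) = #(↥(B'ᶜ)) := by rw [hc, hcompl]
  obtain ⟨e₂⟩ := Cardinal.eq.mp hBc
  set γ : Equiv.Perm (XX G) := glueEquiv B B' e₁ e₂ with hγ
  set d : Equiv.Perm (XX G) := γ * c * γ⁻¹ with hd
  have hdfix : ∀ x, x ∉ Sl G → d x = x := by
    intro x hx
    have hγx : γ.symm x ∉ B := by
      intro hmem
      have : γ (γ.symm x) = (e₁ ⟨γ.symm x, hmem⟩ : XX G) :=
        glueEquiv_apply_mem e₁ e₂ hmem
      rw [Equiv.apply_symm_apply] at this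
      have : x ∈ B' := this ▸ (e₁ ⟨γ.symm x, hmem⟩).2
      exact hx (hB'sub this)
    have hcfix : c (γ.symm x) = γ.symm x := by
      by_contra hne
      exact hγx hne
    rw [hd]
    simp only [Equiv.Perm.mul_apply]
    have : γ⁻¹ x = γ.symm x := rfl
    rw [this, hcfix]
    exact Equiv.apply_symm_apply γ x
  obtain ⟨ρ, hρ⟩ := eq_slabLevel_of_fixes hdfix
  have hdN : d ∈ NC k := by rw [hρ]; exact slab_mem k hk ρ
  have : c = γ⁻¹ * d * γ := by rw [hd]; group
  rw [this]
  have := conj_mem_NC k hdN γ⁻¹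
  simpa using this

end Colarge

section ZornPart
variable {α : Type u}

lemma compl_dichotomy [Infinite α] (s : Set α) :
    #(↥s) = #α ∨ #(↥(sᶜ)) = #α := by
  by_contra h
  push_neg at h
  obtain ⟨h1, h2⟩ := h
  have l1 : #(↥s) < #α := lt_of_le_of_ne (Cardinal.mk_set_le _) h1
  have l2 : #(↥(sᶜ)) < #α := lt_of_le_of_ne (Cardinal.mk_set_le _) h2
  have : #α ≤ #(↥s) + #(↥(sᶜ)) := by
    calc #α = #(↥(s ∪ sᶜ)) := by rw [Set.union_compl_self]; exact Cardinal.mk_univ.symm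
      _ ≤ _ := Cardinal.mk_union_le _ _
  exact absurd (lt_of_le_of_lt this
    (Cardinal.add_lt_of_lt (Cardinal.aleph0_le_mk α) l1 l2)) (lt_irrefl _)

lemma exists_half [Infinite α] (M : Set α) (hM : #(↥M) = #α) :
    ∃ S : Set α, S ⊆ M ∧ #(↥S) = #α ∧ #(↥(M \ S)) = #α := by
  have hM0 : (ℵ₀ : Cardinal.{u}) ≤ #(↥M) := hM ▸ Cardinal.aleph0_le_mk α
  have h2 : #(↥M × Bool) = #(↥M) := by
    have e : (↥M × Bool) ≃ (↥M ⊕ ↥M) :=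
      (Equiv.prodComm _ _).trans (Equiv.boolProdEquivSum _)
    rw [Cardinal.mk_congr e, Cardinal.mk_sum, Cardinal.lift_id]
    exact Cardinal.add_eq_self hM0
  obtain ⟨u⟩ := Cardinal.eq.mp h2.symm
  have etrue : ∀ b : Bool, #({q : ↥M × Bool | q.2 = b}) = #(↥M) := by
    intro b
    apply Cardinal.mk_congr
    exact { toFun := fun q => q.1.1
            invFun := fun m => ⟨(m, b), rfl⟩
            left_inv := fun q => by
              obtain ⟨⟨m, b'⟩, hq⟩ := q
              simp only [Set.mem_setOf_eq] at hq
              subst hq; rfl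
            right_inv := fun m => rfl }
  have key : ∀ b : Bool, #(Subtype.val '' ((fun p => u p) ⁻¹' {q : ↥M × Bool | q.2 = b})) = #(↥M) := by
    intro b
    rw [Cardinal.mk_image_eq Subtype.val_injective]
    rw [← etrue b]
    exact Cardinal.mk_preimage_of_injective_of_subset_range _ _ u.injective
      (by rw [Equiv.range_eq_univ]; exact Set.subset_univ _)
  refine ⟨Subtype.val '' ((fun p => u p) ⁻¹' {q : ↥M × Bool | q.2 = true}), ?_, ?_, ?_⟩
  · rintro x ⟨p, hp, rfl⟩; exact p.2
  · rw [key true, hM]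
  · apply le_antisymm (le_trans (Cardinal.mk_le_mk_of_subset (Set.diff_subset)) (hM.le))
    rw [← hM, ← key false]
    apply Cardinal.mk_le_mk_of_subset
    rintro x ⟨p, hp, rfl⟩
    refine ⟨p.2, ?_⟩
    rintro ⟨p', hp', hpp⟩
    have : p' = p := Subtype.val_injective hpp
    subst this
    simp only [Set.mem_preimage, Set.mem_setOf_eq] at hp hp'
    rw [hp'] at hp
    exact Bool.noConfusion hp

lemma exists_pair_set [Infinite α] (π : Equiv.Perm α)
    (hsupp : #({x | π x ≠ x} : Set α) = #α) :
    ∃ S : Set α, (∀ x ∈ S, π x ≠ x) ∧ (∀ x ∈ S, π x ∉ S) ∧ #(↥S) = #α ∧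
      #(↥((S ∪ π '' S)ᶜ)) = #α := by
  classical
  set supp : Set α := {x | π x ≠ x} with hsuppdef
  set 𝒮 : Set (Set α) :=
    {F | F ⊆ supp ∧ ∀ x ∈ F, ∀ y ∈ F, x ≠ y → x ≠ π y ∧ π x ≠ y} with h𝒮
  have hzorn : ∃ M, ∅ ⊆ M ∧ Maximal (· ∈ 𝒮) M := by
    apply zorn_subset_nonempty
    · intro c hc hchain hne
      refine ⟨⋃₀ c, ⟨?_, ?_⟩, fun s hs => Set.subset_sUnion_of_mem hs⟩
      · rintro x ⟨F, hF, hxF⟩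
        exact (hc hF).1 hxF
      · rintro x ⟨F1, hF1, hx⟩ y ⟨F2, hF2, hy⟩ hxy
        rcases hchain.total hF1 hF2 with h | h
        · exact (hc hF2).2 x (h hx) y hy hxy
        · exact (hc hF1).2 x hx y (h hy) hxy
    · exact ⟨Set.empty_subset _, fun x hx => absurd hx (Set.notMem_empty x)⟩
  obtain ⟨M, -, hMmax⟩ := hzorn
  have hMS : M ∈ 𝒮 := hMmax.1
  have hcover : supp ⊆ M ∪ (π '' M ∪ π.symm '' M) := by
    intro x hx
    by_contra hxn
    simp only [Set.mem_union, not_or] at hxn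
    obtain ⟨hxM, hxπM, hxπiM⟩ := hxn
    have hins : insert x M ∈ 𝒮 := by
      constructor
      · intro y hy
        rcases Set.mem_insert_iff.mp hy with rfl | hyM
        · exact hx
        · exact hMS.1 hyM
      · intro a ha b hb hab
        rcases Set.mem_insert_iff.mp ha with rfl | haM
        · rcases Set.mem_insert_iff.mp hb with rfl | hbM
          · exact absurd rfl hab
          · constructor
            · intro hc; exact hxπM ⟨b, hbM, hc.symm⟩
            · intro hc
              apply hxπiM
              refine ⟨π a, hc ▸ hbM, ?_⟩
              simp
        · rcases Set.mem_insert_iff.mp hb with rfl | hbM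
          · constructor
            · intro hc
              apply hxπiM
              refine ⟨π b, ?_, by simp⟩
              rw [← hc]; exact haM
            · intro hc; exact hxπM ⟨a, haM, hc⟩
          · exact hMS.2 a haM b hbM hab
    have := hMmax.2 hins (Set.subset_insert x M)
    exact hxM (this (Set.mem_insert x M))
  have hMcard : #(↥M) = #α := by
    by_contra hne
    have hlt : #(↥M) < #α := lt_of_le_of_ne (Cardinal.mk_set_le _) hne
    have h1 : #(↥(π '' M)) = #(↥M) := Cardinal.mk_image_eq π.injective
    have h2 : #(↥(π.symm '' M)) = #(↥M) := Cardinal.mk_image_eq π.symm.injective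
    have : #α ≤ #(↥M) + (#(↥M) + #(↥M)) := by
      calc #α = #(↥supp) := hsupp.symm
        _ ≤ #(↥(M ∪ (π '' M ∪ π.symm '' M))) := Cardinal.mk_le_mk_of_subset hcover
        _ ≤ #(↥M) + #(↥(π '' M ∪ π.symm '' M)) := Cardinal.mk_union_le _ _
        _ ≤ #(↥M) + (#(↥(π '' M)) + #(↥(π.symm '' M))) := by
            exact add_le_add le_rfl (Cardinal.mk_union_le _ _)
        _ = #(↥M) + (#(↥M) + #(↥M)) := by rw [h1, h2]
    have hlt2 : #(↥M) + (#(↥M) + #(↥M)) < #α :=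
      Cardinal.add_lt_of_lt (Cardinal.aleph0_le_mk α) hlt
        (Cardinal.add_lt_of_lt (Cardinal.aleph0_le_mk α) hlt hlt)
    exact absurd (lt_of_le_of_lt this hlt2) (lt_irrefl _)
  obtain ⟨S, hSM, hScard, hMS2⟩ := exists_half M hMcard
  have hS1 : ∀ x ∈ S, π x ≠ x := fun x hx => hMS.1 (hSM hx)
  have hS2 : ∀ x ∈ S, π x ∉ S := by
    intro x hx hπx
    by_cases hxx : x = π x
    · exact hS1 x hx hxx.symm
    · exact (hMS.2 x (hSM hx) (π x) (hSM hπx) hxx).2 rfl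
  refine ⟨S, hS1, hS2, hScard, ?_⟩
  apply le_antisymm (Cardinal.mk_set_le _)
  rw [← hMS2]
  apply Cardinal.mk_le_mk_of_subset
  rintro y ⟨hyM, hyS⟩
  simp only [Set.mem_compl_iff, Set.mem_union, not_or]
  refine ⟨hyS, ?_⟩
  rintro ⟨x, hxS, rfl⟩
  by_cases hxy : x = π x
  · exact hS1 x hxS hxy.symm
  · exact (hMS.2 x (hSM hxS) (π x) hyM hxy).2 rfl

end ZornPart

section Main

/-- the `B₁` level-one block -/
def B1 (G : Type u) [Group G] : Set (XX G) := {x : XX G | x.1 = 1}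

def eB1 : ↥(B1 G) ≃ TT G where
  toFun x := (x : XX G).2
  invFun t := ⟨(1, t), rfl⟩
  left_inv x := by
    obtain ⟨⟨g, t⟩, hg⟩ := x
    have : g = 1 := hg
    subst this
    rfl
  right_inv t := rfl

lemma mk_B1_compl (k : G) (hk : k ≠ 1) : #(↥((B1 G)ᶜ)) = #(XX G) := by
  apply le_antisymm (Cardinal.mk_set_le _)
  have : #(TT G) ≤ #(↥((B1 G)ᶜ)) := by
    apply Cardinal.mk_le_of_injective (f := fun t => ⟨(k, t), hk⟩)
    intro a b hab
    have h2 := congrArg Subtype.val hab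
    exact congrArg Prod.snd h2
  calc #(XX G) = #(TT G) := mk_XX_eq
    _ ≤ _ := this

theorem NC_eq_top (k : G) (hk : k ≠ 1) : NC k = (⊤ : Subgroup (Equiv.Perm (XX G))) := by
  classical
  rw [Subgroup.eq_top_iff']
  intro π
  by_cases hcompl : #(↥({x : XX G | π x ≠ x}ᶜ)) = #(XX G)
  · exact colarge_mem k hk π hcompl
  · have hsupp : #({x : XX G | π x ≠ x} : Set (XX G)) = #(XX G) := by
      rcases compl_dichotomy {x : XX G | π x ≠ x} with h | h
      · exact h
      · exact absurd h hcompl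
    obtain ⟨S, hS1, hS2, hS3, hS4⟩ := exists_pair_set π hsupp
    set A : Set (XX G) := S ∪ π '' S with hA
    have hAcard : #(↥A) = #(XX G) := by
      apply le_antisymm (Cardinal.mk_set_le _)
      rw [← hS3]
      exact Cardinal.mk_le_mk_of_subset Set.subset_union_left
    have hTTA : #(TT G) = #(↥A) := by rw [hAcard, mk_XX_eq]
    obtain ⟨eA⟩ := Cardinal.eq.mp hTTA
    set e₁ : ↥(B1 G) ≃ ↥A := (eB1 (G := G)).trans eA with he₁
    have hBc : #(↥((B1 G)ᶜ)) = #(↥(Aᶜ)) := by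
      rw [mk_B1_compl k hk]
      rw [← hS4]
    obtain ⟨e₂⟩ := Cardinal.eq.mp hBc
    set γ : Equiv.Perm (XX G) := glueEquiv (B1 G) A e₁ e₂ with hγ
    -- the involution on A swapping S and π '' S
    have hmemA : ∀ x : ↥A, (x : XX G) ∉ S → π.symm (x : XX G) ∈ S := by
      intro x hx
      have h2 := x.2.resolve_left hx
      obtain ⟨s, hs, hsx⟩ := h2
      rw [← hsx]
      simpa using hs
    set f : ↥A → ↥A := fun x =>
      if h : (x : XX G) ∈ S then ⟨π x, Or.inr ⟨x, h, rfl⟩⟩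
      else ⟨π.symm x, Or.inl (hmemA x h)⟩ with hf
    have hinv : Function.Involutive f := by
      intro x
      by_cases h : (x : XX G) ∈ S
      · have h1 : f x = ⟨π x, Or.inr ⟨x, h, rfl⟩⟩ := dif_pos h
        rw [h1]
        have h2 : ((⟨π x, Or.inr ⟨x, h, rfl⟩⟩ : ↥A) : XX G) ∉ S := hS2 _ h
        have h3 : f ⟨π x, Or.inr ⟨x, h, rfl⟩⟩
            = ⟨π.symm (π x), Or.inl (hmemA _ h2)⟩ := dif_neg h2
        rw [h3]
        apply Subtype.ext
        simp
      · have h1 : f x = ⟨π.symm x, Or.inl (hmemA x h)⟩ := dif_neg h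
        rw [h1]
        have h2 : ((⟨π.symm x, Or.inl (hmemA x h)⟩ : ↥A) : XX G) ∈ S := hmemA x h
        have h3 : f ⟨π.symm x, Or.inl (hmemA x h)⟩
            = ⟨π (π.symm x), Or.inr ⟨_, h2, rfl⟩⟩ := dif_pos h2
        rw [h3]
        apply Subtype.ext
        simp
    set ρA : Equiv.Perm ↥A := hinv.toPerm f with hρA
    set Θ : Equiv.Perm (TT G) := eA.symm.permCongr ρA with hΘ
    set m : Equiv.Perm (XX G) := γ * fib (mirFun k Θ) * γ⁻¹ with hm
    have hmN : m ∈ NC k := conj_mem_NC k (mir_mem k hk Θ) γ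
    have hkey : ∀ s ∈ S, m s = π s := by
      intro s hs
      have hsA : s ∈ A := Or.inl hs
      have h1 : (γ⁻¹ : Equiv.Perm (XX G)) s = ((e₁.symm ⟨s, hsA⟩ : ↥(B1 G)) : XX G) :=
        glueEquiv_symm_apply_mem e₁ e₂ hsA
      set b : ↥(B1 G) := e₁.symm ⟨s, hsA⟩ with hb
      have hb1 : (b : XX G).1 = 1 := b.2
      have h2 : fib (mirFun k Θ) (b : XX G) = (1, Θ (b : XX G).2) := by
        rw [fib_apply, hb1]
        congr 1
        simp [mirFun]
      have h3 : ((1 : G), Θ (b : XX G).2) ∈ B1 G := rfl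
      have h4 : γ ((1 : G), Θ (b : XX G).2) = ((e₁ ⟨((1 : G), Θ (b : XX G).2), h3⟩ : ↥A) : XX G) :=
        glueEquiv_apply_mem e₁ e₂ h3
      have h5 : (e₁ ⟨((1 : G), Θ (b : XX G).2), h3⟩ : ↥A) = eA (Θ (b : XX G).2) := by
        rw [he₁]
        rfl
      have h6 : Θ (b : XX G).2 = eA.symm (ρA (eA (b : XX G).2)) := by
        rw [hΘ]
        rfl
      have h7 : eA (b : XX G).2 = ⟨s, hsA⟩ := by
        have : (b : XX G).2 = eB1 b := rfl
        rw [this, hb]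
        have : eA (eB1 (e₁.symm ⟨s, hsA⟩)) = e₁ (e₁.symm ⟨s, hsA⟩) := rfl
        rw [this, Equiv.apply_symm_apply]
      have h8 : ((ρA ⟨s, hsA⟩ : ↥A) : XX G) = π s := by
        have hx : ρA ⟨s, hsA⟩ = f ⟨s, hsA⟩ := rfl
        rw [hx, hf]
        simp only
        rw [dif_pos hs]
      have hms : m s = γ (fib (mirFun k Θ) ((γ⁻¹ : Equiv.Perm (XX G)) s)) := rfl
      rw [hms, h1, h2, h4, h5, h6, h7, Equiv.apply_symm_apply]
      exact h8
    set c : Equiv.Perm (XX G) := m⁻¹ * π with hc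
    have hcfix : ∀ s ∈ S, c s = s := by
      intro s hs
      have : c s = m⁻¹ (π s) := rfl
      rw [this, ← hkey s hs]
      simp
    have hccard : #(↥({x : XX G | c x ≠ x}ᶜ)) = #(XX G) := by
      apply le_antisymm (Cardinal.mk_set_le _)
      rw [← hS3]
      apply Cardinal.mk_le_mk_of_subset
      intro s hs
      simp only [Set.mem_compl_iff, Set.mem_setOf_eq, not_not]
      exact hcfix s hs
    have hcN : c ∈ NC k := colarge_mem k hk c hccard
    have : π = m * c := by rw [hc]; group
    rw [this]
    exact Subgroup.mul_mem _ hmN hcN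

end Main

section QuotHelpers

lemma mem_nc_map {A B : Type u} [Group A] [Group B] (φ : A →* B) {v x : A}
    (hx : x ∈ Subgroup.normalClosure {v}) : φ x ∈ Subgroup.normalClosure {φ v} := by
  have hsub : Subgroup.normalClosure {v} ≤ (Subgroup.normalClosure {φ v}).comap φ := by
    apply Subgroup.normalClosure_le_normal
    rintro s rfl
    exact Subgroup.mem_comap.mpr (Subgroup.subset_normalClosure rfl)
  exact hsub hx

def expHom : FreeGroup Unit →* Multiplicative ℤ :=
  FreeGroup.lift (fun _ => Multiplicative.ofAdd (1:ℤ))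

lemma freegroup_eq_pow (f : FreeGroup Unit) :
    f = (FreeGroup.of ()) ^ ((expHom f).toAdd) := by
  have h : (zpowersHom (FreeGroup Unit) (FreeGroup.of ())).comp expHom
      = MonoidHom.id (FreeGroup Unit) := by
    apply FreeGroup.ext_hom
    intro a
    cases a
    simp [expHom, zpowersHom_apply]
  have h2 := DFunLike.congr_fun h f
  simp only [MonoidHom.comp_apply, MonoidHom.id_apply] at h2
  conv_lhs => rw [← h2]
  rw [zpowersHom_apply]

/-- the projection to the free factor -/
def prHom (A : Type u) [Group A] : GZ A →* FreeGroup Unit :=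
  Coprod.lift 1 (MonoidHom.id _)

lemma coprod_map_surjective {A B : Type u} [Group A] [Group B] {f : A →* B}
    (hf : Function.Surjective f) :
    Function.Surjective (Coprod.map f (MonoidHom.id (FreeGroup Unit))) := by
  intro y
  induction y using Coprod.induction_on with
  | inl b =>
    obtain ⟨a, rfl⟩ := hf b
    exact ⟨Coprod.inl a, by simp⟩
  | inr n => exact ⟨Coprod.inr n, by simp⟩
  | mul x y hx hy =>
    obtain ⟨x', rfl⟩ := hx
    obtain ⟨y', rfl⟩ := hy
    exact ⟨x' * y', by simp⟩

end QuotHelpers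

section AbPart
variable {G : Type u} [Group G]

/-- the combined abelian character -/
def thetaHom (B : Type u) [CommGroup B] (β : G →* B) :
    GZ G →* B × ULift.{u} (Multiplicative ℤ) :=
  Coprod.lift ((MonoidHom.inl B _).comp β)
    ((MonoidHom.inr B _).comp
      (FreeGroup.lift (fun _ => MulEquiv.ulift.symm (Multiplicative.ofAdd (1:ℤ)))))

lemma thetaHom_snd (B : Type u) [CommGroup B] (β : G →* B) :
    (MonoidHom.snd B (ULift.{u} (Multiplicative ℤ))).comp (thetaHom B β)
      = (MulEquiv.ulift.symm.toMonoidHom).comp (expHom.comp (prHom G)) := by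
  apply Coprod.hom_ext
  · apply MonoidHom.ext
    intro g
    simp [thetaHom, prHom, expHom]
  · apply FreeGroup.ext_hom
    intro a
    cases a
    simp [thetaHom, prHom, expHom]

lemma theta_snd_apply (B : Type u) [CommGroup B] (β : G →* B) (x : GZ G) :
    (thetaHom B β x).2 = MulEquiv.ulift.symm (expHom (prHom G x)) := by
  have h := DFunLike.congr_fun (thetaHom_snd B β) x
  simpa using h

lemma key_ab (w : GZ G) (hsimp : IsSimpleGroup (Gtilde G w))
    (hnc : ¬ ∀ a b : Gtilde G w, a * b = b * a)
    (B : Type u) [CommGroup B] (β : G →* B) (hβ : Function.Surjective β) :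
    Subsingleton ((B × ULift.{u} (Multiplicative ℤ)) ⧸ Subgroup.zpowers (thetaHom B β w)) := by
  set Z := Subgroup.zpowers (thetaHom B β w) with hZ
  have hker : Subgroup.normalClosure {w} ≤ ((QuotientGroup.mk' Z).comp (thetaHom B β)).ker := by
    apply Subgroup.normalClosure_le_normal
    rintro s rfl
    rw [SetLike.mem_coe, MonoidHom.mem_ker, MonoidHom.comp_apply, QuotientGroup.mk'_apply,
      QuotientGroup.eq_one_iff]
    exact Subgroup.mem_zpowers _
  set χ : Gtilde G w →* (B × ULift.{u} (Multiplicative ℤ)) ⧸ Z :=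
    QuotientGroup.lift _ ((QuotientGroup.mk' Z).comp (thetaHom B β)) hker with hχ
  have hθ_surj : Function.Surjective (thetaHom B β) := by
    rintro ⟨b, n⟩
    obtain ⟨g, rfl⟩ := hβ b
    refine ⟨Coprod.inl g * Coprod.inr ((FreeGroup.of ()) ^ (n.down.toAdd)), ?_⟩
    rw [map_mul]
    have h1 : thetaHom B β (Coprod.inl g) = (β g, 1) := by
      simp [thetaHom]
    have h2 : thetaHom B β (Coprod.inr ((FreeGroup.of ()) ^ (n.down.toAdd)))
        = (1, n) := by
      have h3 : thetaHom B β (Coprod.inr ((FreeGroup.of ()) ^ (n.down.toAdd)))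
          = (1, MulEquiv.ulift.symm ((Multiplicative.ofAdd (1:ℤ)) ^ (n.down.toAdd))) := by
        simp [thetaHom, map_zpow]
      rw [h3]
      have h4 : (Multiplicative.ofAdd (1:ℤ)) ^ (n.down.toAdd) = n.down := by
        rw [← Int.ofAdd_mul, one_mul, ofAdd_toAdd]
      rw [h4]
      rfl
    rw [h1, h2]
    simp
  have hχ_surj : Function.Surjective χ := by
    intro a
    obtain ⟨x, rfl⟩ := QuotientGroup.mk'_surjective Z a
    obtain ⟨y, hy⟩ := hθ_surj x
    refine ⟨QuotientGroup.mk' _ y, ?_⟩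
    rw [QuotientGroup.mk'_apply, hχ, QuotientGroup.lift_mk']
    simp [hy]
  rcases hsimp.eq_bot_or_eq_top_of_normal χ.ker (MonoidHom.normal_ker χ) with hbot | htop
  · exfalso
    have hinj : Function.Injective χ := (MonoidHom.ker_eq_bot_iff χ).mp hbot
    apply hnc
    intro a b
    apply hinj
    rw [map_mul, map_mul, mul_comm]
  · have h1 : ∀ a : (B × ULift.{u} (Multiplicative ℤ)) ⧸ Z, a = 1 := by
      intro a
      obtain ⟨y, rfl⟩ := hχ_surj a
      have hy : y ∈ χ.ker := htop ▸ Subgroup.mem_top y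
      exact MonoidHom.mem_ker.mp hy
    exact ⟨fun a b => (h1 a).trans (h1 b).symm⟩

lemma exp_pm_one (w : GZ G) (hsimp : IsSimpleGroup (Gtilde G w))
    (hnc : ¬ ∀ a b : Gtilde G w, a * b = b * a) :
    (expHom (prHom G w)).toAdd = 1 ∨ (expHom (prHom G w)).toAdd = -1 := by
  have hsub := key_ab w hsimp hnc PUnit.{u+1} 1 (fun x => ⟨1, Subsingleton.elim _ _⟩)
  set e : ℤ := (expHom (prHom G w)).toAdd with he
  have hmem : ((1 : PUnit.{u+1}), (ULift.up (Multiplicative.ofAdd (1:ℤ))))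
      ∈ Subgroup.zpowers (thetaHom PUnit.{u+1} 1 w) := by
    rw [← QuotientGroup.eq_one_iff]
    exact Subsingleton.elim _ _
  obtain ⟨m, hm⟩ := Subgroup.mem_zpowers_iff.mp hmem
  have h2 := congrArg (fun p => (Prod.snd p).down.toAdd) hm
  simp only at h2
  have h3 : ((thetaHom PUnit.{u+1} 1 w) ^ m).2 = ((thetaHom PUnit.{u+1} 1 w).2) ^ m := by
    rw [Prod.pow_snd]
  rw [h3, theta_snd_apply] at h2
  have h4 : ((MulEquiv.ulift.symm (expHom (prHom G w)) : ULift.{u} (Multiplicative ℤ)) ^ m).down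
      = (expHom (prHom G w)) ^ m := by
    rw [← map_zpow]
    rfl
  rw [h4] at h2
  rw [toAdd_zpow] at h2
  rw [toAdd_ofAdd] at h2
  simp only [smul_eq_mul, ← he] at h2
  have h5 := Int.eq_one_or_neg_one_of_mul_eq_one' h2
  rcases h5 with ⟨-, h6⟩ | ⟨-, h6⟩
  · exact Or.inl h6
  · exact Or.inr h6

lemma comm_contradiction (w : GZ G) (hsimp : IsSimpleGroup (Gtilde G w))
    (hnc : ¬ ∀ a b : Gtilde G w, a * b = b * a) (hGnt : Nontrivial G)
    (hcomm : ∀ a b : G, a * b = b * a) : False := by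
  letI : CommGroup G := { (inferInstance : Group G) with mul_comm := hcomm }
  have hsub := key_ab w hsimp hnc G (MonoidHom.id G) (fun x => ⟨x, rfl⟩)
  obtain ⟨g, hg⟩ := exists_ne (1 : G)
  have hmem : ((g : G), (1 : ULift.{u} (Multiplicative ℤ)))
      ∈ Subgroup.zpowers (thetaHom G (MonoidHom.id G) w) := by
    rw [← QuotientGroup.eq_one_iff]
    exact Subsingleton.elim _ _
  obtain ⟨m, hm⟩ := Subgroup.mem_zpowers_iff.mp hmem
  have h2 := congrArg (fun p => (Prod.snd p).down.toAdd) hm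
  simp only at h2
  have h3 : ((thetaHom G (MonoidHom.id G) w) ^ m).2 = ((thetaHom G (MonoidHom.id G) w).2) ^ m := by
    rw [Prod.pow_snd]
  rw [h3, theta_snd_apply] at h2
  have h4 : ((MulEquiv.ulift.symm (expHom (prHom G w)) : ULift.{u} (Multiplicative ℤ)) ^ m).down
      = (expHom (prHom G w)) ^ m := by
    rw [← map_zpow]
    rfl
  rw [h4, toAdd_zpow] at h2
  simp only [smul_eq_mul] at h2
  have h2' : m * (expHom (prHom G w)).toAdd = 0 := by simpa using h2
  have hm0 : m = 0 := by
    rcases exp_pm_one w hsimp hnc with h | h <;> rw [h] at h2' <;> omega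
  rw [hm0] at hm
  simp only [zpow_zero] at hm
  have hfst := congrArg Prod.fst hm
  simp only [Prod.fst_one] at hfst
  exact hg hfst.symm

end AbPart

section Step5
variable {G : Type u} [Group G]

lemma inl_mem_nc_of_mem {w : GZ G}
    (hKL : ∀ (H : Type u) [Group H], ∀ v : GZ H, Nontrivial H → Nontrivial (Gtilde H v))
    (hsimp : IsSimpleGroup (Gtilde G w))
    {N : Subgroup G} (hN : N.Normal) (hNtop : N ≠ ⊤) :
    ∀ n ∈ N, Coprod.inl n ∈ Subgroup.normalClosure {w} := by
  letI := hN
  set F : GZ G →* GZ (G ⧸ N) := Coprod.map (QuotientGroup.mk' N) (MonoidHom.id _) with hF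
  set wQ : GZ (G ⧸ N) := F w with hwQ
  have hQnt : Nontrivial (G ⧸ N) := by
    obtain ⟨g, hg⟩ : ∃ g : G, g ∉ N := by
      by_contra h
      push_neg at h
      exact hNtop (by rw [Subgroup.eq_top_iff']; exact h)
    refine ⟨⟨QuotientGroup.mk' N g, 1, ?_⟩⟩
    rw [Ne, QuotientGroup.mk'_apply, QuotientGroup.eq_one_iff]
    exact hg
  have hQtnt : Nontrivial (Gtilde (G ⧸ N) wQ) := hKL (G ⧸ N) wQ hQnt
  have hker : Subgroup.normalClosure {w}
      ≤ ((QuotientGroup.mk' (Subgroup.normalClosure {wQ})).comp F).ker := by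
    apply Subgroup.normalClosure_le_normal
    rintro s rfl
    rw [SetLike.mem_coe, MonoidHom.mem_ker, MonoidHom.comp_apply, QuotientGroup.mk'_apply,
      QuotientGroup.eq_one_iff]
    exact Subgroup.subset_normalClosure rfl
  set πb : Gtilde G w →* Gtilde (G ⧸ N) wQ := QuotientGroup.lift _ _ hker with hπb
  have hsurj : Function.Surjective πb := by
    intro a
    obtain ⟨x, rfl⟩ := QuotientGroup.mk'_surjective _ a
    obtain ⟨y, hy⟩ := coprod_map_surjective (QuotientGroup.mk'_surjective N) x
    refine ⟨QuotientGroup.mk' _ y, ?_⟩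
    rw [QuotientGroup.mk'_apply, hπb, QuotientGroup.lift_mk']
    simp [hF, hy]
  have hker2 : πb.ker = ⊥ := by
    rcases hsimp.eq_bot_or_eq_top_of_normal πb.ker (MonoidHom.normal_ker _) with h | h
    · exact h
    · exfalso
      obtain ⟨a, b, hab⟩ := hQtnt
      obtain ⟨x, rfl⟩ := hsurj a
      obtain ⟨y, rfl⟩ := hsurj b
      apply hab
      have hx : x ∈ πb.ker := h ▸ Subgroup.mem_top x
      have hy : y ∈ πb.ker := h ▸ Subgroup.mem_top y
      rw [MonoidHom.mem_ker.mp hx, MonoidHom.mem_ker.mp hy]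
  intro n hn
  have h1 : πb (QuotientGroup.mk' _ (Coprod.inl n)) = 1 := by
    rw [QuotientGroup.mk'_apply, hπb, QuotientGroup.lift_mk']
    simp only [MonoidHom.comp_apply]
    have h2 : F (Coprod.inl n) = Coprod.inl (QuotientGroup.mk' N n) := by
      rw [hF]
      simp
    rw [h2]
    have h3 : QuotientGroup.mk' N n = 1 := by
      rw [QuotientGroup.mk'_apply, QuotientGroup.eq_one_iff]
      exact hn
    rw [h3, map_one, map_one]
  have h2 : QuotientGroup.mk' (Subgroup.normalClosure {w}) (Coprod.inl n) ∈ πb.ker :=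
    MonoidHom.mem_ker.mpr h1
  rw [hker2, Subgroup.mem_bot] at h2
  rwa [QuotientGroup.mk'_apply, QuotientGroup.eq_one_iff] at h2

end Step5

end KLaux


/-- **Proposition 1**: the Kervaire–Laudenbach conjecture (KL) is equivalent to
its "simple" version (KLs). -/
theorem proposition1 :
    (∀ (G : Type u) [Group G], ∀ w : GZ G,
        Nontrivial G → Nontrivial (Gtilde G w)) ↔
      (∀ (G : Type u) [Group G], ∀ w : GZ G,
        ¬ (IsSimpleGroup G ∧ ¬ ∀ a b : G, a * b = b * a) →
          ¬ (IsSimpleGroup (Gtilde G w) ∧ ¬ ∀ a b : Gtilde G w, a * b = b * a)) := by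
  constructor
  · -- (KL) → (KLs)
    intro hKL G _ w hG
    rintro ⟨hsimp, hnc⟩
    -- Step 1 : `G` is nontrivial
    have hGnt : Nontrivial G := by
      by_contra hss
      have hsub : Subsingleton G := not_nontrivial_iff_subsingleton.mp hss
      apply hnc
      have hpow : ∀ a : Gtilde G w, ∃ n : ℤ,
          a = (QuotientGroup.mk' (Subgroup.normalClosure {w}) (tGen G)) ^ n := by
        intro a
        obtain ⟨x, rfl⟩ := QuotientGroup.mk'_surjective _ a
        induction x using Coprod.induction_on with
        | inl g =>
          refine ⟨0, ?_⟩
          have hg1 : g = 1 := Subsingleton.elim _ _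
          rw [hg1]
          simp
        | inr f =>
          refine ⟨(KLaux.expHom f).toAdd, ?_⟩
          conv_lhs => rw [KLaux.freegroup_eq_pow f]
          rw [map_zpow, map_zpow]
          rfl
        | mul x y hx hy =>
          obtain ⟨nx, hxe⟩ := hx
          obtain ⟨ny, hye⟩ := hy
          exact ⟨nx + ny, by rw [map_mul, hxe, hye, zpow_add]⟩
      intro a b
      obtain ⟨n, rfl⟩ := hpow a
      obtain ⟨m, rfl⟩ := hpow b
      rw [← zpow_add, ← zpow_add, add_comm]
    -- Step 2 : `G` is not simple
    have hGns : ¬ IsSimpleGroup G := by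
      intro hGsimp
      have hGcomm : ∀ a b : G, a * b = b * a := by
        by_contra hc
        exact hG ⟨hGsimp, hc⟩
      exact KLaux.comm_contradiction w hsimp hnc hGnt hGcomm
    -- Step 3 : a proper nontrivial normal subgroup
    obtain ⟨N, hNn, hNbot, hNtop⟩ : ∃ N : Subgroup G, N.Normal ∧ N ≠ ⊥ ∧ N ≠ ⊤ := by
      by_contra h
      push_neg at h
      apply hGns
      exact { toNontrivial := hGnt,
              eq_bot_or_eq_top_of_normal := by
                intro H hH
                by_cases hb : H = ⊥
                · exact Or.inl hb
                · exact Or.inr (h H hH hb) }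
    obtain ⟨k, hkN, hk1⟩ : ∃ k, k ∈ N ∧ k ≠ (1 : G) := by
      by_contra h
      push_neg at h
      apply hNbot
      rw [eq_bot_iff]
      intro x hx
      rw [Subgroup.mem_bot]
      exact h x hx
    have hkdead : Coprod.inl k ∈ Subgroup.normalClosure {w} :=
      KLaux.inl_mem_nc_of_mem hKL hsimp hNn hNtop k hkN
    have hepm := KLaux.exp_pm_one w hsimp hnc
    -- Step 4 : the permutation group contradiction
    have hσ1 : KLaux.cayHom k ≠ (1 : Equiv.Perm (KLaux.XX G)) := by
      intro hc
      apply hk1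
      have h2 := congrArg (fun p : Equiv.Perm (KLaux.XX G) =>
        (p ((1 : G), (((1:G), (⟨0⟩ : ULift.{u} ℤ)), (⟨0⟩ : ULift.{u} ℤ)))).1) hc
      simpa using h2
    haveI hEnt : Nontrivial (Equiv.Perm (KLaux.XX G)) := ⟨⟨KLaux.cayHom k, 1, hσ1⟩⟩
    set F : GZ G →* GZ (Equiv.Perm (KLaux.XX G)) :=
      Coprod.map (KLaux.cayHom) (MonoidHom.id _) with hF
    set wE : GZ (Equiv.Perm (KLaux.XX G)) := F w with hwE
    have hEnt2 : Nontrivial (Gtilde (Equiv.Perm (KLaux.XX G)) wE) := hKL _ wE hEnt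
    set q := QuotientGroup.mk' (Subgroup.normalClosure {wE}) with hq
    have hinlσ : Coprod.inl (KLaux.cayHom k) ∈ Subgroup.normalClosure {wE} := by
      have h1 := KLaux.mem_nc_map F hkdead
      have h2 : F (Coprod.inl k) = Coprod.inl (KLaux.cayHom k) := by
        rw [hF]; simp
      rwa [h2] at h1
    have hinl : ∀ p : Equiv.Perm (KLaux.XX G),
        Coprod.inl p ∈ Subgroup.normalClosure {wE} := by
      intro p
      have hp : p ∈ Subgroup.normalClosure {KLaux.cayHom k} := by
        have htp : Subgroup.normalClosure {KLaux.cayHom k}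
            = (⊤ : Subgroup (Equiv.Perm (KLaux.XX G))) := KLaux.NC_eq_top k hk1
        rw [htp]
        exact Subgroup.mem_top p
      have h2 := KLaux.mem_nc_map
        (Coprod.inl : Equiv.Perm (KLaux.XX G) →* GZ (Equiv.Perm (KLaux.XX G))) hp
      have h3 : Subgroup.normalClosure {Coprod.inl (KLaux.cayHom k)}
          ≤ Subgroup.normalClosure {wE} :=
        Subgroup.normalClosure_le_normal (by rintro s rfl; exact hinlσ)
      exact h3 h2
    have hqinl : ∀ p : Equiv.Perm (KLaux.XX G), q (Coprod.inl p) = 1 := by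
      intro p
      rw [hq, QuotientGroup.mk'_apply, QuotientGroup.eq_one_iff]
      exact hinl p
    have hcomp : q = (q.comp Coprod.inr).comp (KLaux.prHom _) := by
      apply Coprod.hom_ext
      · apply MonoidHom.ext
        intro p
        simp only [MonoidHom.comp_apply]
        rw [hqinl p]
        have : (KLaux.prHom (Equiv.Perm (KLaux.XX G))) (Coprod.inl p) = 1 := by
          simp [KLaux.prHom]
        rw [this, map_one, map_one]
      · apply MonoidHom.ext
        intro f
        simp only [MonoidHom.comp_apply]
        have : (KLaux.prHom (Equiv.Perm (KLaux.XX G))) (Coprod.inr f) = f := by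
          simp [KLaux.prHom]
        rw [this]
    have hpr : (KLaux.prHom _) wE = (KLaux.prHom G) w := by
      have hcc : (KLaux.prHom (Equiv.Perm (KLaux.XX G))).comp F = KLaux.prHom G := by
        apply Coprod.hom_ext
        · apply MonoidHom.ext
          intro g
          simp [KLaux.prHom, hF]
        · apply MonoidHom.ext
          intro f
          simp [KLaux.prHom, hF]
      rw [hwE, ← hcc]
      rfl
    have hτ : q (Coprod.inr (FreeGroup.of ())) = 1 := by
      have h1 : q wE = 1 := by
        rw [hq, QuotientGroup.mk'_apply, QuotientGroup.eq_one_iff]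
        exact Subgroup.subset_normalClosure rfl
      have h3 := DFunLike.congr_fun hcomp wE
      rw [h1] at h3
      simp only [MonoidHom.comp_apply] at h3
      rw [hpr] at h3
      rw [KLaux.freegroup_eq_pow ((KLaux.prHom G) w), map_zpow, map_zpow] at h3
      rcases hepm with he | he
      · rw [he] at h3
        simpa using h3.symm
      · rw [he] at h3
        have h4 := h3.symm
        rw [zpow_neg, zpow_one, inv_eq_one] at h4
        exact h4
    have hsub : ∀ a : Gtilde (Equiv.Perm (KLaux.XX G)) wE, a = 1 := by
      intro a
      obtain ⟨x, rfl⟩ := QuotientGroup.mk'_surjective _ a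
      show q x = 1
      induction x using Coprod.induction_on with
      | inl p => exact hqinl p
      | inr f =>
        have h5 : q (Coprod.inr f)
            = (q (Coprod.inr (FreeGroup.of ()))) ^ ((KLaux.expHom f).toAdd) := by
          conv_lhs => rw [KLaux.freegroup_eq_pow f]
          rw [map_zpow, map_zpow]
        rw [h5, hτ, one_zpow]
      | mul x y hx hy => rw [map_mul, hx, hy, one_mul]
    obtain ⟨a, b, hab⟩ := hEnt2
    exact hab ((hsub a).trans (hsub b).symm)
  · -- (KLs) → (KL)
    intro hKLs G _ w hGnt
    by_contra hnt
    have hsub : Subsingleton (Gtilde G w) := not_nontrivial_iff_subsingleton.mp hnt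
    have htop : ∀ x : GZ G, x ∈ Subgroup.normalClosure {w} := by
      intro x
      have h1 := Subsingleton.elim (α := Gtilde G w)
        (QuotientGroup.mk' (Subgroup.normalClosure {w}) x) 1
      rwa [QuotientGroup.mk'_apply, QuotientGroup.eq_one_iff] at h1
    -- the simple nonabelian group `S`
    haveI hSsimple : IsSimpleGroup (ULift.{u} ↥(alternatingGroup (Fin 5))) := by
      haveI := alternatingGroup.isSimpleGroup_five
      exact IsSimpleGroup.isSimpleGroup_of_surjective
        (MulEquiv.ulift (α := ↥(alternatingGroup (Fin 5)))).symm.toMonoidHom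
        (MulEquiv.ulift.symm.surjective)
    have hSnc : ¬ ∀ a b : ULift.{u} ↥(alternatingGroup (Fin 5)), a * b = b * a := by
      intro hc
      set a : Equiv.Perm (Fin 5) := Equiv.swap 0 1 * Equiv.swap 1 2 with haa
      set b : Equiv.Perm (Fin 5) := Equiv.swap 2 3 * Equiv.swap 3 4 with hbb
      have ha : a ∈ alternatingGroup (Fin 5) := by
        rw [Equiv.Perm.mem_alternatingGroup]
        decide
      have hb : b ∈ alternatingGroup (Fin 5) := by
        rw [Equiv.Perm.mem_alternatingGroup]
        decide
      have hab : a * b ≠ b * a := by decide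
      have h2 := hc (ULift.up ⟨a, ha⟩) (ULift.up ⟨b, hb⟩)
      apply hab
      have h3 := congrArg (fun x : ULift.{u} ↥(alternatingGroup (Fin 5)) =>
        ((x.down : ↥(alternatingGroup (Fin 5))) : Equiv.Perm (Fin 5))) h2
      simpa using h3
    set S := ULift.{u} ↥(alternatingGroup (Fin 5))
    set F' : GZ G →* GZ (G × S) :=
      Coprod.map (MonoidHom.inl G S) (MonoidHom.id (FreeGroup Unit)) with hF'
    set w' : GZ (G × S) := F' w with hw'
    have hGns : ¬ (IsSimpleGroup (G × S) ∧ ¬ ∀ a b : G × S, a * b = b * a) := by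
      rintro ⟨hsimp', -⟩
      obtain ⟨g, hg⟩ := exists_ne (1 : G)
      obtain ⟨s0, hs0⟩ := exists_ne (1 : S)
      rcases hsimp'.eq_bot_or_eq_top_of_normal ((⊤ : Subgroup G).prod ⊥)
          inferInstance with h | h
      · have hmem : ((g, (1:S)) : G × S) ∈ (⊤ : Subgroup G).prod (⊥ : Subgroup S) :=
          ⟨Subgroup.mem_top g, rfl⟩
        rw [h, Subgroup.mem_bot] at hmem
        exact hg (congrArg Prod.fst hmem)
      · have hmem : (((1:G), s0) : G × S) ∈ (⊤ : Subgroup G).prod (⊥ : Subgroup S) := by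
          rw [h]; exact Subgroup.mem_top _
        exact hs0 (Subgroup.mem_bot.mp hmem.2)
    apply hKLs (G × S) w' hGns
    -- `Gtilde (G × S) w' ≃* S`
    have hdead : ∀ x : GZ G, F' x ∈ Subgroup.normalClosure {w'} := by
      intro x
      exact KLaux.mem_nc_map F' (htop x)
    have hkerψ : Subgroup.normalClosure {w'}
        ≤ (Coprod.lift (MonoidHom.snd G S) (1 : FreeGroup Unit →* S)).ker := by
      apply Subgroup.normalClosure_le_normal
      rintro s rfl
      rw [SetLike.mem_coe, MonoidHom.mem_ker, hw']
      have hcomp2 : (Coprod.lift (MonoidHom.snd G S) (1 : FreeGroup Unit →* S)).comp F' = 1 := by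
        apply Coprod.hom_ext
        · apply MonoidHom.ext; intro g; simp [hF']
        · apply MonoidHom.ext; intro f; simp [hF']
      have h5 := DFunLike.congr_fun hcomp2 w
      simpa using h5
    set ψ : Gtilde (G × S) w' →* S := QuotientGroup.lift _
      (Coprod.lift (MonoidHom.snd G S) (1 : FreeGroup Unit →* S)) hkerψ with hψ
    set φ : S →* Gtilde (G × S) w' :=
      (QuotientGroup.mk' (Subgroup.normalClosure {w'})).comp
        ((Coprod.inl : (G × S) →* GZ (G × S)).comp (MonoidHom.inr G S)) with hφ
    have hψφ : ∀ s : S, ψ (φ s) = s := by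
      intro s
      rw [hφ, hψ]
      simp only [MonoidHom.comp_apply, QuotientGroup.mk'_apply]
      rw [QuotientGroup.lift_mk']
      simp
    have hH : ((φ.comp ψ).comp (QuotientGroup.mk' (Subgroup.normalClosure {w'})))
        = QuotientGroup.mk' (Subgroup.normalClosure {w'}) := by
      apply Coprod.hom_ext
      · apply MonoidHom.ext
        rintro ⟨g, s⟩
        simp only [MonoidHom.comp_apply, QuotientGroup.mk'_apply]
        rw [QuotientGroup.lift_mk']
        have h6 : (Coprod.lift (MonoidHom.snd G S) (1 : FreeGroup Unit →* S))
            (Coprod.inl ((g, s) : G × S)) = s := by simp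
        rw [h6]
        rw [hφ]
        simp only [MonoidHom.comp_apply, QuotientGroup.mk'_apply]
        rw [eq_comm, QuotientGroup.eq]
        have h7 : ((Coprod.inl ((g, s) : G × S) : GZ (G × S)))⁻¹
              * (Coprod.inl ((MonoidHom.inr G S) s) : GZ (G × S))
            = (Coprod.inl (((g, s) : G × S)⁻¹ * ((1 : G), s)) : GZ (G × S)) := by
          rw [map_mul, map_inv]
          rfl
        rw [h7]
        have h8 : (((g, s) : G × S)⁻¹ * (1, s)) = ((g⁻¹, 1) : G × S) := by
          rw [Prod.ext_iff]
          constructor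
          · simp
          · simp
            exact inv_mul_cancel s
        rw [h8]
        have h9 := hdead (Coprod.inl g⁻¹)
        have h10 : F' (Coprod.inl g⁻¹) = Coprod.inl ((g⁻¹, 1) : G × S) := by
          rw [hF', Coprod.map_apply_inl]
          rfl
        rwa [h10] at h9
      · apply MonoidHom.ext
        intro f
        simp only [MonoidHom.comp_apply, QuotientGroup.mk'_apply]
        rw [QuotientGroup.lift_mk']
        have h6 : (Coprod.lift (MonoidHom.snd G S) (1 : FreeGroup Unit →* S))
            (Coprod.inr f) = 1 := by simp
        rw [h6, map_one]
        have h9 := hdead (Coprod.inr f)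
        have h10 : F' (Coprod.inr f) = Coprod.inr f := by
          rw [hF']; simp
        rw [h10] at h9
        rw [eq_comm, QuotientGroup.eq_one_iff]
        exact h9
    have hφψ : ∀ a : Gtilde (G × S) w', φ (ψ a) = a := by
      intro a
      obtain ⟨x, rfl⟩ := QuotientGroup.mk'_surjective _ a
      exact DFunLike.congr_fun hH x
    set e : Gtilde (G × S) w' ≃* S :=
      { toFun := ψ, invFun := φ, left_inv := hφψ, right_inv := hψφ,
        map_mul' := map_mul ψ } with he
    haveI : Nontrivial (Gtilde (G × S) w') := by
      obtain ⟨s0, hs0⟩ := exists_ne (1 : S)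
      refine ⟨⟨φ s0, 1, fun hc => hs0 ?_⟩⟩
      have := congrArg ψ hc
      rwa [hψφ, map_one] at this
    constructor
    · exact IsSimpleGroup.isSimpleGroup_of_surjective e.symm.toMonoidHom e.symm.surjective
    · intro hc
      apply hSnc
      intro a b
      have h11 := hc (φ a) (φ b)
      have h12 := congrArg ψ h11
      rwa [map_mul, map_mul, hψφ, hψφ] at h12
end

section
/- Proposition 2: The following two statements are equivalent: (KL) for every group G (in a fixed universe) and every element w of G ∗ ⟨t⟩∞, if G is nontrivial then G̃ = (G ∗ ⟨t⟩∞)/⟨⟨w⟩⟩ is nontrivial; (KL') for every group G (in the same universe) and every element w of G ∗ ⟨t⟩∞ whose exponent sum equals 1 or −1, the natural map G → G̃ is injective. -/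
open Monoid

universe u

open Equiv Subgroup Set Cardinal Function

noncomputable section KLHelpers

variable {X : Type u}

lemma exists_perm_eq_on {A B : Set X} (e : A ≃ B) (h : #(Aᶜ : Set X) = #(Bᶜ : Set X)) :
    ∃ u : Equiv.Perm X, ∀ x (hx : x ∈ A), u x = (e ⟨x, hx⟩ : X) := by
  classical
  obtain ⟨c⟩ := Cardinal.eq.1 h
  refine ⟨(Equiv.Set.sumCompl A).symm.trans ((e.sumCongr c).trans (Equiv.Set.sumCompl B)), ?_⟩
  intro x hx
  simp [Equiv.Set.sumCompl_symm_apply_of_mem hx]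

lemma exists_half (α : Type*) [Infinite α] :
    ∃ s : Set α, #s = #α ∧ #(sᶜ : Set α) = #α := by
  classical
  have h : #(α ⊕ α : Type _) = #α := by
    simp [Cardinal.add_eq_self (Cardinal.aleph0_le_mk α)]
  obtain ⟨e⟩ := Cardinal.eq.1 h
  have hcompl : (Set.range fun a => e (Sum.inl a))ᶜ = Set.range fun a => e (Sum.inr a) := by
    ext x
    constructor
    · intro hx
      rcases h' : e.symm x with a | a
      · exact absurd ⟨a, by simp [← h']⟩ hx
      · exact ⟨a, by simp [← h']⟩
    · rintro ⟨a, rfl⟩ ⟨b, hb⟩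
      exact Sum.inr_ne_inl (e.injective hb).symm
  refine ⟨Set.range fun a => e (Sum.inl a), ?_, ?_⟩
  · exact Cardinal.mk_range_eq _ (e.injective.comp Sum.inl_injective)
  · rw [hcompl]
    exact Cardinal.mk_range_eq _ (e.injective.comp Sum.inr_injective)

lemma exists_half_subset [Infinite X] {C : Set X} (hC : #C = #X) :
    ∃ C₁ C₂ : Set X, C₁ ⊆ C ∧ C₂ ⊆ C ∧ Disjoint C₁ C₂ ∧ #C₁ = #X ∧ #C₂ = #X := by
  haveI : Infinite C :=
    Cardinal.infinite_iff.2 (by rw [hC]; exact Cardinal.aleph0_le_mk X)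
  obtain ⟨s, hs, hsc⟩ := exists_half C
  refine ⟨Subtype.val '' s, Subtype.val '' sᶜ, ?_, ?_, ?_, ?_, ?_⟩
  · exact Subtype.coe_image_subset _ _
  · exact Subtype.coe_image_subset _ _
  · exact Set.disjoint_image_of_injective Subtype.val_injective disjoint_compl_right
  · rw [Cardinal.mk_image_eq Subtype.val_injective, hs, hC]
  · rw [Cardinal.mk_image_eq Subtype.val_injective, hsc, hC]

lemma exists_perm_maps_into {S T : Set X} (hST : #S ≤ #T) (hS : #(Sᶜ : Set X) = #X)
    (hT : #(Tᶜ : Set X) = #X) :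
    ∃ γ : Equiv.Perm X, ∀ x ∈ S, γ x ∈ T := by
  obtain ⟨j⟩ := (Cardinal.le_def _ _).1 hST
  have hinj : Function.Injective fun s : S => (j s : X) :=
    fun a b hab => j.injective (Subtype.val_injective hab)
  set R : Set X := Set.range fun s : S => (j s : X) with hR
  have hRT : R ⊆ T := by rintro x ⟨s, rfl⟩; exact (j s).2
  have hRc : #(Rᶜ : Set X) = #X := by
    refine le_antisymm (Cardinal.mk_set_le _) ?_
    rw [← hT]
    exact Cardinal.mk_le_mk_of_subset (Set.compl_subset_compl.2 hRT)
  obtain ⟨u, hu⟩ := exists_perm_eq_on (Equiv.ofInjective _ hinj) (hS.trans hRc.symm)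
  refine ⟨u, fun x hx => ?_⟩
  rw [hu x hx]
  exact hRT (Equiv.ofInjective _ hinj ⟨x, hx⟩).2

end KLHelpers

noncomputable section KLHelpers2

variable {X : Type u}

lemma mem_of_large_fix [Infinite X] (N : Subgroup (Equiv.Perm X)) [hN : N.Normal] (A₀ : Set X)
    [DecidablePred (· ∈ A₀)] (hA₀ : ∀ ρ : Equiv.Perm A₀, Equiv.Perm.ofSubtype ρ ∈ N)
    (hA : #A₀ = #X) (hAc : #(A₀ᶜ : Set X) = #X)
    (u : Equiv.Perm X) (hu : #X ≤ #({x | u x = x} : Set X)) : u ∈ N := by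
  classical
  set S : Set X := {x | u x ≠ x} with hSdef
  have hSc : #(Sᶜ : Set X) = #X := by
    have hcompl : Sᶜ = {x | u x = x} := by ext x; simp [hSdef]
    rw [hcompl]
    exact le_antisymm (Cardinal.mk_set_le _) hu
  have hST : #S ≤ #A₀ := le_of_le_of_eq (Cardinal.mk_set_le _) hA.symm
  obtain ⟨γ, hγ⟩ := exists_perm_maps_into hST hSc hAc
  set v : Equiv.Perm X := γ * u * γ⁻¹ with hv
  have h₂ : ∀ x, v x ≠ x → x ∈ A₀ := by
    intro x hx
    have h3 : u (γ⁻¹ x) ≠ γ⁻¹ x := by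
      intro hfix
      apply hx
      show γ (u (γ⁻¹ x)) = x
      rw [hfix]
      exact γ.apply_symm_apply x
    have := hγ _ h3
    rwa [show γ (γ⁻¹ x) = x from γ.apply_symm_apply x] at this
  have h₁ : ∀ x, x ∈ A₀ ↔ v x ∈ A₀ := by
    intro x
    constructor
    · intro hx
      by_contra hvx
      have hfix : v (v x) = v x := by
        by_contra hne
        exact hvx (h₂ _ hne)
      have : v x = x := v.injective hfix
      rw [this] at hvx
      exact hvx hx
    · intro hvx
      by_contra hx
      have hfix : v x = x := by
        by_contra hne
        exact hx (h₂ _ hne)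
      rw [hfix] at hvx
      exact hx hvx
  have hkey : Equiv.Perm.ofSubtype (v.subtypePerm (fun x => (h₁ x).symm)) = v :=
    Equiv.Perm.ofSubtype_subtypePerm (fun x => (h₁ x).symm) h₂
  have hvN : v ∈ N := by rw [← hkey]; exact hA₀ _
  have : γ⁻¹ * v * γ⁻¹⁻¹ ∈ N := hN.conj_mem v hvN γ⁻¹
  simpa [hv, mul_assoc] using this

lemma perm_split [Infinite X] (τ : Equiv.Perm X) :
    ∃ u v : Equiv.Perm X, τ = u * v ∧ #X ≤ #({x | u x = x} : Set X) ∧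
      #X ≤ #({x | v x = x} : Set X) := by
  classical
  obtain ⟨M, hM, hMc⟩ : ∃ M : Set X, #M = #X ∧ #((M ∪ τ '' M)ᶜ : Set X) = #X := by
    obtain ⟨s, hs, hsc⟩ := exists_half X
    by_cases hcase : #((s ∪ τ '' s)ᶜ : Set X) = #X
    · exact ⟨s, hs, hcase⟩
    · have hlt : #((s ∪ τ '' s)ᶜ : Set X) < #X :=
        lt_of_le_of_ne (Cardinal.mk_set_le _) hcase
      have hcompl_eq : (s ∪ τ '' s)ᶜ = sᶜ \ τ '' s := by
        rw [Set.compl_union, Set.diff_eq]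
      have hbig : #(sᶜ ∩ τ '' s : Set X) = #X := by
        by_contra hne
        have h1 : #(sᶜ ∩ τ '' s : Set X) < #X := lt_of_le_of_ne (Cardinal.mk_set_le _) hne
        have h2 : #(sᶜ : Set X) ≤ #((s ∪ τ '' s)ᶜ : Set X) + #(sᶜ ∩ τ '' s : Set X) := by
          rw [hcompl_eq]
          calc #(sᶜ : Set X) = #((sᶜ \ τ '' s ∪ sᶜ ∩ τ '' s : Set X)) := by
                rw [Set.diff_union_inter]
          _ ≤ _ := Cardinal.mk_union_le _ _
        rw [hsc] at h2
        exact absurd h2 (not_le.2 (Cardinal.add_lt_of_lt (Cardinal.aleph0_le_mk X) hlt h1))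
      set A : Set X := s ∩ τ ⁻¹' sᶜ with hA
      have hAcard : #A = #X := by
        have himg : τ '' A = τ '' s ∩ sᶜ := by
          rw [hA, Set.image_inter τ.injective, Set.image_preimage_eq _ τ.surjective]
        calc #A = #(τ '' A : Set X) := (Cardinal.mk_image_eq τ.injective).symm
        _ = #X := by rw [himg, Set.inter_comm]; exact hbig
      obtain ⟨A₁, A₂, hA₁, hA₂, hdisj, h1, h2⟩ := exists_half_subset hAcard
      refine ⟨A₁, h1, le_antisymm (Cardinal.mk_set_le _) ?_⟩
      have hsub : A₂ ⊆ (A₁ ∪ τ '' A₁)ᶜ := by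
        intro x hx
        simp only [Set.mem_compl_iff, Set.mem_union, not_or]
        refine ⟨fun hx1 => Set.disjoint_right.1 hdisj hx hx1, fun hx1 => ?_⟩
        obtain ⟨y, hy, rfl⟩ := hx1
        have hys : τ y ∈ sᶜ := (hA₁ hy).2
        exact hys (hA₂ hx).1
      calc #X = #A₂ := h2.symm
      _ ≤ _ := Cardinal.mk_le_mk_of_subset hsub
  obtain ⟨C₁, C₂, hC₁, hC₂, hdisjC, hc1, hc2⟩ := exists_half_subset hMc
  have hdMC : Disjoint M C₁ := by
    rw [Set.disjoint_right]
    intro x hx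
    exact fun hxM => (hC₁ hx) (Or.inl hxM)
  have hdTC : Disjoint (τ '' M) C₁ := by
    rw [Set.disjoint_right]
    intro x hx
    exact fun hxM => (hC₁ hx) (Or.inr hxM)
  have hdMC2 : Disjoint M C₂ := by
    rw [Set.disjoint_right]
    intro x hx
    exact fun hxM => (hC₂ hx) (Or.inl hxM)
  have hdTC2 : Disjoint (τ '' M) C₂ := by
    rw [Set.disjoint_right]
    intro x hx
    exact fun hxM => (hC₂ hx) (Or.inr hxM)
  let eM : (M : Set X) ≃ (τ '' M : Set X) := Equiv.Set.image τ M τ.injective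
  let e : ((M ∪ C₁ : Set X)) ≃ ((τ '' M ∪ C₁ : Set X)) :=
    (Equiv.Set.union hdMC).trans ((eM.sumCongr (Equiv.refl C₁)).trans (Equiv.Set.union hdTC).symm)
  have hcompl : #(((M ∪ C₁)ᶜ : Set X)) = #((( (τ '' M ∪ C₁))ᶜ : Set X)) := by
    have hub1 : C₂ ⊆ (M ∪ C₁)ᶜ := by
      intro x hx
      simp only [Set.mem_compl_iff, Set.mem_union, not_or]
      exact ⟨fun h => Set.disjoint_right.1 hdMC2 hx h,
        fun h => Set.disjoint_right.1 hdisjC hx h⟩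
    have hub2 : C₂ ⊆ (τ '' M ∪ C₁)ᶜ := by
      intro x hx
      simp only [Set.mem_compl_iff, Set.mem_union, not_or]
      exact ⟨fun h => Set.disjoint_right.1 hdTC2 hx h,
        fun h => Set.disjoint_right.1 hdisjC hx h⟩
    have e1 : #(((M ∪ C₁)ᶜ : Set X)) = #X :=
      le_antisymm (Cardinal.mk_set_le _) (by rw [← hc2]; exact Cardinal.mk_le_mk_of_subset hub1)
    have e2 : #(((τ '' M ∪ C₁)ᶜ : Set X)) = #X :=
      le_antisymm (Cardinal.mk_set_le _) (by rw [← hc2]; exact Cardinal.mk_le_mk_of_subset hub2)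
    rw [e1, e2]
  obtain ⟨u, hu⟩ := exists_perm_eq_on e hcompl
  have huM : ∀ x (hx : x ∈ M), u x = τ x := by
    intro x hx
    rw [hu x (Or.inl hx)]
    have : e ⟨x, Or.inl hx⟩ = ⟨τ x, Or.inl ⟨x, hx, rfl⟩⟩ := by
      simp only [e, Equiv.trans_apply]
      rw [Equiv.Set.union_apply_left hdMC hx]
      simp only [Equiv.sumCongr_apply, Sum.map_inl]
      rw [Equiv.symm_apply_eq, Equiv.Set.union_apply_left hdTC]
      rfl
    rw [this]
  have huC : ∀ x (hx : x ∈ C₁), u x = x := by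
    intro x hx
    rw [hu x (Or.inr hx)]
    have : e ⟨x, Or.inr hx⟩ = ⟨x, Or.inr hx⟩ := by
      simp only [e, Equiv.trans_apply]
      rw [Equiv.Set.union_apply_right hdMC hx]
      simp only [Equiv.sumCongr_apply, Sum.map_inr]
      rw [Equiv.symm_apply_eq, Equiv.Set.union_apply_right hdTC]
      rfl
    rw [this]
  refine ⟨u, u⁻¹ * τ, by group, ?_, ?_⟩
  · rw [← hc1]
    apply Cardinal.mk_le_mk_of_subset
    intro x hx
    exact huC x hx
  · rw [← hM]
    apply Cardinal.mk_le_mk_of_subset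
    intro x hx
    show (u⁻¹ * τ) x = x
    have : u x = τ x := huM x hx
    simp [Equiv.Perm.mul_apply, ← this]

end KLHelpers2

noncomputable section KLCore

variable {Z : Type*} {W : Type*}

/-- Fiberwise permutations of `Z × W` as a monoid hom. -/
def fiberPerm : (Z → Equiv.Perm W) →* Equiv.Perm (Z × W) where
  toFun f := Equiv.prodShear (Equiv.refl Z) f
  map_one' := by ext ⟨z, w⟩ <;> rfl
  map_mul' f g := by ext ⟨z, w⟩ <;> rfl

@[simp] lemma fiberPerm_apply (f : Z → Equiv.Perm W) (p : Z × W) :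
    fiberPerm f p = (p.1, f p.1 p.2) := rfl

def permEquivOfEquiv {α β : Type*} (e : α ≃ β) : Equiv.Perm α ≃* Equiv.Perm β where
  toEquiv := e.permCongr
  map_mul' p q := by ext x; simp [Equiv.permCongr_apply]

@[simp] lemma permEquivOfEquiv_apply {α β : Type*} (e : α ≃ β) (p : Equiv.Perm α) (x : β) :
    permEquivOfEquiv e p x = e (p (e.symm x)) := rfl

lemma prodCongr_conj_fiberPerm (ζ : Equiv.Perm Z) (f : Z → Equiv.Perm W) :
    (Equiv.prodCongr ζ (Equiv.refl W)) * fiberPerm f * (Equiv.prodCongr ζ (Equiv.refl W))⁻¹ =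
      fiberPerm (fun z => f (ζ.symm z)) := by
  ext ⟨z, w⟩ <;>
  · simp only [Equiv.Perm.mul_apply, Equiv.Perm.inv_def, Equiv.prodCongr_symm,
      Equiv.prodCongr_apply, Equiv.refl_symm, Prod.map_apply, Equiv.refl_apply,
      fiberPerm_apply, Equiv.apply_symm_apply]

variable (ζ : Equiv.Perm Z) (z₀ : Z) (hz : ζ z₀ ≠ z₀)

lemma engine [DecidableEq Z] (hz : ζ z₀ ≠ z₀) (ρ : Equiv.Perm W) :
    fiberPerm (Pi.mulSingle (ζ z₀) ρ * Pi.mulSingle z₀ ρ⁻¹) ∈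
      Subgroup.normalClosure ({Equiv.prodCongr ζ (Equiv.refl W)} : Set (Equiv.Perm (Z × W))) := by
  set σ : Equiv.Perm (Z × W) := Equiv.prodCongr ζ (Equiv.refl W) with hσ
  set N := Subgroup.normalClosure ({σ} : Set (Equiv.Perm (Z × W))) with hNdef
  have hσN : σ ∈ N := Subgroup.subset_normalClosure rfl
  set f : Z → Equiv.Perm W := Pi.mulSingle z₀ ρ with hf
  have hconj : (fiberPerm f) * σ⁻¹ * (fiberPerm f)⁻¹ ∈ N :=
    Subgroup.normalClosure_normal.conj_mem _ (inv_mem hσN) _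
  have hmem : σ * ((fiberPerm f) * σ⁻¹ * (fiberPerm f)⁻¹) ∈ N := mul_mem hσN hconj
  have hrw : σ * ((fiberPerm f) * σ⁻¹ * (fiberPerm f)⁻¹) =
      fiberPerm (Pi.mulSingle (ζ z₀) ρ * Pi.mulSingle z₀ ρ⁻¹) := by
    have h1 : σ * (fiberPerm f) * σ⁻¹ = fiberPerm (fun z => f (ζ.symm z)) :=
      prodCongr_conj_fiberPerm ζ f
    have h2 : σ * ((fiberPerm f) * σ⁻¹ * (fiberPerm f)⁻¹) =
        (σ * (fiberPerm f) * σ⁻¹) * (fiberPerm f)⁻¹ := by group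
    rw [h2, h1, ← map_inv, ← map_mul]
    congr 1
    funext z
    have hz' : z₀ ≠ ζ z₀ := fun h => hz h.symm
    simp only [Pi.mul_apply, Pi.inv_apply, hf]
    by_cases h0 : z = ζ z₀
    · subst h0
      rw [ζ.symm_apply_apply z₀, Pi.mulSingle_eq_same, Pi.mulSingle_eq_of_ne hz,
        Pi.mulSingle_eq_same, Pi.mulSingle_eq_of_ne hz]
      simp
    · by_cases h1 : z = z₀
      · rw [h1]
        have hs : ζ.symm z₀ ≠ z₀ := by
          intro h
          have h2 := congrArg ζ h
          rw [ζ.apply_symm_apply] at h2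
          exact hz h2.symm
        rw [Pi.mulSingle_eq_of_ne hs, Pi.mulSingle_eq_same, Pi.mulSingle_eq_of_ne hz',
          Pi.mulSingle_eq_same]
      · have hs : ζ.symm z ≠ z₀ := by
          intro h
          have h2 := congrArg ζ h
          rw [ζ.apply_symm_apply] at h2
          exact h0 h2
        rw [Pi.mulSingle_eq_of_ne hs, Pi.mulSingle_eq_of_ne h1, Pi.mulSingle_eq_of_ne h0,
          Pi.mulSingle_eq_of_ne h1]
        simp
  rw [← hrw]; exact hmem


lemma engine_comm [DecidableEq Z] (hz : ζ z₀ ≠ z₀) (a b : Equiv.Perm W) :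
    fiberPerm (Pi.mulSingle (ζ z₀) (a * b * a⁻¹ * b⁻¹)) ∈
      Subgroup.normalClosure ({Equiv.prodCongr ζ (Equiv.refl W)} : Set (Equiv.Perm (Z × W))) := by
  have hne : z₀ ≠ ζ z₀ := fun h => hz h.symm
  have hne' : ζ z₀ ≠ z₀ := hz
  have h1 := engine ζ z₀ hz a
  have h2 := engine ζ z₀ hz (b * a⁻¹ * b⁻¹)
  have hc : fiberPerm (Pi.mulSingle z₀ b) *
      fiberPerm (Pi.mulSingle (ζ z₀) a * Pi.mulSingle z₀ a⁻¹) *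
      (fiberPerm (Pi.mulSingle z₀ b))⁻¹ ∈
      Subgroup.normalClosure ({Equiv.prodCongr ζ (Equiv.refl W)} : Set (Equiv.Perm (Z × W))) :=
    Subgroup.normalClosure_normal.conj_mem _ h1 _
  have hmem := mul_mem hc h2
  have hkey : fiberPerm (Pi.mulSingle z₀ b) *
      fiberPerm (Pi.mulSingle (ζ z₀) a * Pi.mulSingle z₀ a⁻¹) *
      (fiberPerm (Pi.mulSingle z₀ b))⁻¹ *
      fiberPerm (Pi.mulSingle (ζ z₀) (b * a⁻¹ * b⁻¹) * Pi.mulSingle z₀ (b * a⁻¹ * b⁻¹)⁻¹) =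
      fiberPerm (Pi.mulSingle (ζ z₀) (a * b * a⁻¹ * b⁻¹)) := by
    rw [← map_inv, ← map_mul, ← map_mul, ← map_mul]
    congr 1
    funext z
    simp only [Pi.mul_apply, Pi.inv_apply]
    by_cases h0 : z = z₀
    · rw [h0]
      simp only [Pi.mulSingle_eq_same, Pi.mulSingle_eq_of_ne hne]
      group
    · by_cases h1 : z = ζ z₀
      · rw [h1]
        simp only [Pi.mulSingle_eq_same, Pi.mulSingle_eq_of_ne hne']
        group
      · simp only [Pi.mulSingle_eq_of_ne h0, Pi.mulSingle_eq_of_ne h1]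
        group
  rw [← hkey]; exact hmem

lemma slice_comm {V : Type*} (K : V ≃ ℤ × V) (π : Equiv.Perm V) :
    ∃ a b : Equiv.Perm V,
      a * b * a⁻¹ * b⁻¹ = permEquivOfEquiv K.symm (fiberPerm (Pi.mulSingle (0 : ℤ) π)) := by
  classical
  set s : Equiv.Perm (ℤ × V) := Equiv.prodCongr (Equiv.addRight (1 : ℤ)) (Equiv.refl V) with hs
  set F : ℤ → Equiv.Perm V := fun n => if 0 ≤ n then π⁻¹ else 1 with hF
  have hconj : s * fiberPerm F * s⁻¹ = fiberPerm (fun n => F ((Equiv.addRight (1 : ℤ)).symm n)) :=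
    prodCongr_conj_fiberPerm _ F
  have hcomm : s * fiberPerm F * s⁻¹ * (fiberPerm F)⁻¹ = fiberPerm (Pi.mulSingle (0 : ℤ) π) := by
    rw [hconj, ← map_inv, ← map_mul]
    congr 1
    funext n
    simp only [Pi.mul_apply, Pi.inv_apply, hF]
    have hsymm : (Equiv.addRight (1 : ℤ)).symm n = n - 1 := rfl
    rw [hsymm]
    by_cases h0 : n = 0
    · rw [h0]
      norm_num
    · rw [Pi.mulSingle_eq_of_ne h0]
      by_cases hp : 0 ≤ n - 1
      · rw [if_pos hp, if_pos (by omega)]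
        simp
      · rw [if_neg hp, if_neg (by omega)]
        simp
  refine ⟨permEquivOfEquiv K.symm s, permEquivOfEquiv K.symm (fiberPerm F), ?_⟩
  rw [← map_inv, ← map_inv, ← map_mul, ← map_mul, ← map_mul, hcomm]

end KLCore

noncomputable section KLCore2

variable {Z W : Type u}

theorem core_normalClosure_eq_top [Countable Z] [Infinite W]
    (ζ : Equiv.Perm Z) (z₀ : Z) (hz : ζ z₀ ≠ z₀) (K : W ≃ ℤ × W) :
    Subgroup.normalClosure ({Equiv.prodCongr ζ (Equiv.refl W)} : Set (Equiv.Perm (Z × W))) = ⊤ := by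
  classical
  haveI : Nonempty Z := ⟨z₀⟩
  set N := Subgroup.normalClosure
    ({Equiv.prodCongr ζ (Equiv.refl W)} : Set (Equiv.Perm (Z × W))) with hN
  set z₁ := ζ z₀ with hz₁
  have hne : z₀ ≠ z₁ := fun h => hz h.symm
  -- the distinguished subset
  set A₀ : Set (Z × W) := {p | p.1 = z₁ ∧ (K p.2).1 = 0} with hA₀def
  have hq0 : ∀ w : W, (z₁, K.symm (0, w)) ∈ A₀ := by
    intro w
    refine ⟨rfl, ?_⟩
    rw [Equiv.apply_symm_apply]
  let q : W ≃ A₀ :=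
    { toFun := fun w => ⟨(z₁, K.symm (0, w)), hq0 w⟩
      invFun := fun p => (K p.1.2).2
      left_inv := fun w => by simp
      right_inv := fun p => by
        obtain ⟨⟨z, w⟩, hzw, h0⟩ := p
        apply Subtype.ext
        have hKw : (0, (K w).2) = K w := by
          apply Prod.ext
          · exact h0.symm
          · rfl
        show (z₁, K.symm (0, (K w).2)) = (z, w)
        rw [hKw, Equiv.symm_apply_apply]
        exact Prod.ext hzw.symm rfl }
  -- every permutation supported on A₀ is in N
  have hA₀mem : ∀ ρ : Equiv.Perm A₀, Equiv.Perm.ofSubtype ρ ∈ N := by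
    intro ρ
    set π : Equiv.Perm W := (Equiv.permCongr q).symm ρ with hπ
    obtain ⟨a, b, hab⟩ := slice_comm K π
    have hmem := engine_comm ζ z₀ hz a b
    rw [hab] at hmem
    have hkey : Equiv.Perm.ofSubtype ρ =
        fiberPerm (Pi.mulSingle z₁ (permEquivOfEquiv K.symm (fiberPerm (Pi.mulSingle (0 : ℤ) π)))) := by
      apply Equiv.ext
      rintro ⟨z, w⟩
      by_cases hzz : z = z₁
      · subst hzz
        rw [fiberPerm_apply]
        simp only [Pi.mulSingle_eq_same]
        by_cases h0 : (K w).1 = 0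
        · have hmemA : (z₁, w) ∈ A₀ := ⟨rfl, h0⟩
          rw [Equiv.Perm.ofSubtype_apply_of_mem ρ hmemA]
          have hqw : q ((K w).2) = ⟨(z₁, w), hmemA⟩ := by
            apply Subtype.ext
            show (z₁, K.symm (0, (K w).2)) = (z₁, w)
            have hKw : (0, (K w).2) = K w := Prod.ext h0.symm rfl
            rw [hKw, Equiv.symm_apply_apply]
          have hπval : π ((K w).2) = q.symm (ρ ⟨(z₁, w), hmemA⟩) := by
            rw [hπ]
            show q.symm (ρ (q ((K w).2))) = _
            rw [hqw]
          have hfib : fiberPerm (Pi.mulSingle (0 : ℤ) π) (K w) = (0, π ((K w).2)) := by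
            rw [fiberPerm_apply]
            have h0' : (K w).1 = 0 := h0
            rw [h0']
            simp only [Pi.mulSingle_eq_same]
          rw [permEquivOfEquiv_apply, Equiv.symm_symm, hfib, hπval]
          calc ((ρ ⟨(z₁, w), hmemA⟩ : A₀) : Z × W)
              = ((q (q.symm (ρ ⟨(z₁, w), hmemA⟩)) : A₀) : Z × W) := by
                rw [q.apply_symm_apply]
          _ = (z₁, K.symm (0, q.symm (ρ ⟨(z₁, w), hmemA⟩))) := rfl
        · have hnmem : (z₁, w) ∉ A₀ := fun h => h0 h.2
          rw [Equiv.Perm.ofSubtype_apply_of_not_mem ρ hnmem]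
          rw [permEquivOfEquiv_apply, Equiv.symm_symm, fiberPerm_apply,
            Pi.mulSingle_eq_of_ne h0]
          show (z₁, w) = (z₁, K.symm ((K w).1, (K w).2))
          rw [Prod.mk.eta, Equiv.symm_apply_apply]
      · have hnmem : (z, w) ∉ A₀ := fun h => hzz h.1
        rw [Equiv.Perm.ofSubtype_apply_of_not_mem ρ hnmem, fiberPerm_apply,
          Pi.mulSingle_eq_of_ne hzz]
        rfl
    rw [hkey]
    exact hmem
  -- cardinalities
  haveI : Infinite (Z × W) := Infinite.of_injective (fun w => (z₀, w)) (by
    intro a b hab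
    exact (Prod.ext_iff.1 hab).2)
  have hWX : #W = #(Z × W) := by
    rw [Cardinal.mk_prod, Cardinal.lift_id, Cardinal.lift_id]
    rw [Cardinal.mul_eq_right (Cardinal.aleph0_le_mk W)
      (le_trans Cardinal.mk_le_aleph0 (Cardinal.aleph0_le_mk W)) (Cardinal.mk_ne_zero Z)]
  have hAcard : #A₀ = #(Z × W) := by
    rw [← Cardinal.mk_congr q, hWX]
  have hAc : #(A₀ᶜ : Set (Z × W)) = #(Z × W) := by
    refine le_antisymm (Cardinal.mk_set_le _) ?_
    have hfib : Set.range (fun w : W => ((z₀, w) : Z × W)) ⊆ A₀ᶜ := by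
      rintro p ⟨w, rfl⟩
      exact fun h => hne h.1
    calc #(Z × W) = #W := hWX.symm
    _ = #(Set.range fun w : W => ((z₀, w) : Z × W)) :=
        (Cardinal.mk_range_eq _ (fun a b hab => (Prod.ext_iff.1 hab).2)).symm
    _ ≤ _ := Cardinal.mk_le_mk_of_subset hfib
  -- conclusion
  rw [eq_top_iff']
  intro τ
  obtain ⟨uu, vv, htau, hu, hv⟩ := perm_split τ
  rw [htau]
  exact mul_mem (mem_of_large_fix N A₀ hA₀mem hAcard hAc uu hu)
    (mem_of_large_fix N A₀ hA₀mem hAcard hAc vv hv)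


end KLCore2

noncomputable section KLApp

lemma exists_normally_generated (G : Type u) [Group G] (g : G) (hg : g ≠ 1) :
    ∃ (H : Type u) (_ : Group H) (ι : G →* H), Nontrivial H ∧
      Subgroup.normalClosure {ι g} = ⊤ := by
  classical
  set Hg : Subgroup G := Subgroup.zpowers g with hHg
  let Z : Type u := ↥Hg
  let Q : Type u := G ⧸ Hg
  let U : Type u := ULift.{u} ℤ
  let W : Type u := Q × U
  haveI hcz : Countable Z := by
    have hsurj : Function.Surjective
        (fun k : ℤ => (⟨g ^ k, Subgroup.zpow_mem_zpowers g k⟩ : Z)) := by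
      rintro ⟨x, hx⟩
      obtain ⟨k, hk⟩ := Subgroup.mem_zpowers_iff.1 hx
      exact ⟨k, Subtype.ext hk⟩
    exact hsurj.countable
  haveI : Nonempty Q := ⟨QuotientGroup.mk 1⟩
  haveI : Infinite U := inferInstance
  haveI : Infinite W := Prod.infinite_of_right
  -- the equivalence between G and Z × Q
  have memfrac : ∀ x : G, ((QuotientGroup.mk x : Q).out)⁻¹ * x ∈ Hg := by
    intro x
    exact QuotientGroup.eq.1 (QuotientGroup.out_eq' (QuotientGroup.mk x))
  let eG : G ≃ Z × Q :=
    { toFun := fun x => (⟨((QuotientGroup.mk x : Q).out)⁻¹ * x, memfrac x⟩, QuotientGroup.mk x)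
      invFun := fun p => (p.2.out : G) * (p.1 : G)
      left_inv := fun x => by simp
      right_inv := fun p => by
        obtain ⟨z, q⟩ := p
        have hmkq : (QuotientGroup.mk (q.out * (z : G)) : Q) = q := by
          rw [QuotientGroup.mk_mul_of_mem q.out z.2, QuotientGroup.out_eq']
        refine Prod.ext (Subtype.ext ?_) ?_
        · show ((QuotientGroup.mk (q.out * (z : G)) : Q).out)⁻¹ * (q.out * (z : G)) = (z : G)
          rw [hmkq, inv_mul_cancel_left]
        · exact hmkq }
  let gz : Z := ⟨g, Subgroup.mem_zpowers g⟩
  let ζ : Equiv.Perm Z := Equiv.mulRight gz⁻¹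
  have hz : ζ 1 ≠ 1 := by
    intro h
    apply hg
    have h1 : (1 : Z) * gz⁻¹ = 1 := h
    rw [one_mul] at h1
    have := congrArg (fun z : Z => (z : G)) (inv_inv gz ▸ congrArg Inv.inv h1)
    have h2 : gz = 1 := by simpa using this
    exact congrArg Subtype.val h2
  let Θ : G × U ≃ Z × W := (Equiv.prodCongr eG (Equiv.refl U)).trans (Equiv.prodAssoc Z Q U)
  let regHom : G →* Equiv.Perm (G × U) :=
    { toFun := fun a => Equiv.prodCongr (Equiv.mulRight a⁻¹) (Equiv.refl U)
      map_one' := by ext ⟨x, u⟩ <;> simp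
      map_mul' := fun a b => by ext ⟨x, u⟩ <;> simp [mul_assoc] }
  let ι : G →* Equiv.Perm (Z × W) := (permEquivOfEquiv Θ).toMonoidHom.comp regHom
  have hι : ι g = Equiv.prodCongr ζ (Equiv.refl W) := by
    apply Equiv.ext
    rintro ⟨z, qq, uu⟩
    show Θ (regHom g (Θ.symm (z, (qq, uu)))) = (ζ z, (qq, uu))
    have h1 : Θ.symm (z, (qq, uu)) = (qq.out * (z : G), uu) := rfl
    rw [h1]
    have h2 : regHom g (qq.out * (z : G), uu) = (qq.out * (z : G) * g⁻¹, uu) := rfl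
    rw [h2]
    have hmem : (z : G) * g⁻¹ ∈ Hg := mul_mem z.2 (inv_mem (Subgroup.mem_zpowers g))
    have hmk : (QuotientGroup.mk (qq.out * (z : G) * g⁻¹) : Q) = qq := by
      rw [mul_assoc, QuotientGroup.mk_mul_of_mem qq.out hmem, QuotientGroup.out_eq']
    show ((eG (qq.out * (z : G) * g⁻¹)).1, ((eG (qq.out * (z : G) * g⁻¹)).2, uu)) = (ζ z, (qq, uu))
    have heG : eG (qq.out * (z : G) * g⁻¹) = (ζ z, qq) := by
      refine Prod.ext (Subtype.ext ?_) ?_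
      · show ((QuotientGroup.mk (qq.out * (z : G) * g⁻¹) : Q).out)⁻¹ *
          (qq.out * (z : G) * g⁻¹) = ((z * gz⁻¹ : Z) : G)
        rw [hmk, mul_assoc, inv_mul_cancel_left]
        rfl
      · exact hmk
    rw [heG]
  -- the slicing equivalence for W
  let e2 : U ≃ ℤ := Equiv.ulift
  let e3 : (ℤ × ℤ) ≃ ℤ := (Denumerable.eqv (ℤ × ℤ)).trans (Denumerable.eqv ℤ).symm
  let E1 : ℤ × U ≃ U := (Equiv.prodCongr (Equiv.refl ℤ) e2).trans (e3.trans e2.symm)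
  let K : W ≃ ℤ × W := (Equiv.prodCongr (Equiv.refl Q) E1.symm).trans
    ((Equiv.prodAssoc Q ℤ U).symm.trans
      ((Equiv.prodCongr (Equiv.prodComm Q ℤ) (Equiv.refl U)).trans (Equiv.prodAssoc ℤ Q U)))
  refine ⟨Equiv.Perm (Z × W), inferInstance, ι, ?_, ?_⟩
  · refine nontrivial_of_ne (ι g) 1 ?_
    intro h
    apply hz
    have := congrArg (fun p : Equiv.Perm (Z × W) => p (1, Classical.arbitrary W)) (hι.symm.trans h)
    simpa using (Prod.ext_iff.1 this).1
  · rw [hι]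
    exact core_normalClosure_eq_top ζ 1 hz K


/-- **Proposition 2**: the Kervaire–Laudenbach conjecture (KL) is equivalent to
the conjecture (KL'): if the exponent sum of `w` is `±1`, then the natural map
`G → G̃` is injective. -/
theorem proposition2 :
    (∀ (G : Type u) [Group G], ∀ w : GZ G,
        Nontrivial G → Nontrivial (Gtilde G w)) ↔
      (∀ (G : Type u) [Group G], ∀ w : GZ G,
        (expSum G w = Multiplicative.ofAdd 1 ∨
          expSum G w = Multiplicative.ofAdd (-1)) →
          Function.Injective (natMap G w)) := by
  constructor
  · -- KL → KL'
    intro hKL G _ w hexp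
    have hker : ∀ gel : G, natMap G w gel = 1 → gel = 1 := by
      intro gel hgel
      by_contra hne
      have hmem : Coprod.inl gel ∈ Subgroup.normalClosure ({w} : Set (GZ G)) :=
        (QuotientGroup.eq_one_iff _).1 hgel
      obtain ⟨H, _, ι, hH, htop⟩ := exists_normally_generated G gel hne
      set F : GZ G →* GZ H := Coprod.map ι (MonoidHom.id _) with hF
      set Nw := Subgroup.normalClosure ({F w} : Set (GZ H)) with hNw
      have h1 : F (Coprod.inl gel) ∈ Nw := by
        have hle : Subgroup.normalClosure ({w} : Set (GZ G)) ≤ Nw.comap F := by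
          apply Subgroup.normalClosure_le_normal
          intro x hx
          rw [Set.mem_singleton_iff] at hx
          subst hx
          exact Subgroup.subset_normalClosure rfl
        exact hle hmem
      have h2 : Coprod.inl (ι gel) ∈ Nw := by
        rwa [hF, Coprod.map_apply_inl] at h1
      have h3 : ∀ h : H, Coprod.inl h ∈ Nw := by
        intro h
        have hsub : Subgroup.normalClosure {ι gel} ≤ Nw.comap Coprod.inl := by
          apply Subgroup.normalClosure_le_normal
          intro x hx
          rw [Set.mem_singleton_iff] at hx
          subst hx
          exact h2
        rw [htop] at hsub
        exact hsub (Subgroup.mem_top h)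
      -- now show Nw = ⊤
      set π := QuotientGroup.mk' Nw with hπ
      have hπinl : ∀ h : H, π (Coprod.inl h) = 1 :=
        fun h => (QuotientGroup.eq_one_iff _).2 (h3 h)
      have hπw : π (F w) = 1 :=
        (QuotientGroup.eq_one_iff _).2 (Subgroup.subset_normalClosure rfl)
      set r : GZ H →* FreeGroup Unit := Coprod.lift 1 (MonoidHom.id _) with hr
      have hdecomp : π = (π.comp Coprod.inr).comp r := by
        apply Coprod.hom_ext
        · ext h
          simp [hr, Coprod.lift_apply_inl, hπinl h]
        · rfl
      have hrF : expSum H = (FreeGroup.lift fun _ => Multiplicative.ofAdd (1 : ℤ)).comp r := by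
        apply Coprod.hom_ext
        · ext h
          simp [expSum, hr, Coprod.lift_apply_inl]
        · rfl
      have hexp' : expSum H (F w) = expSum G w := by
        have : (expSum H).comp F = expSum G := by
          apply Coprod.hom_ext
          · ext h
            simp [expSum, hF]
          · rfl
        rw [← this]
        rfl
      set k : ℤ := FreeGroup.freeGroupUnitEquivInt (r (F w)) with hk
      have hyk : r (F w) = FreeGroup.of () ^ k :=
        (FreeGroup.freeGroupUnitEquivInt.symm_apply_apply (r (F w))).symm
      have hofAddk : Multiplicative.ofAdd k = expSum H (F w) := by
        rw [hrF]
        simp only [MonoidHom.comp_apply]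
        rw [hyk, map_zpow, FreeGroup.lift_apply_of]
        rw [← ofAdd_zsmul]
        norm_num
      have hk1 : k = 1 ∨ k = -1 := by
        rw [hexp'] at hofAddk
        rcases hexp with h | h
        · left
          have := hofAddk.trans h
          exact Multiplicative.ofAdd.injective this
        · right
          have := hofAddk.trans h
          exact Multiplicative.ofAdd.injective this
      have hπt : π (Coprod.inr (FreeGroup.of ())) = 1 := by
        have h0 : π (Coprod.inr (r (F w))) = 1 := by
          rw [hdecomp] at hπw
          exact hπw
        rw [hyk, map_zpow, map_zpow] at h0
        rcases hk1 with h | h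
        · rw [h, zpow_one] at h0
          exact h0
        · rw [h] at h0
          rw [zpow_neg, zpow_one, inv_eq_one] at h0
          exact h0
      have hall : ∀ x : GZ H, π x = 1 := by
        have hcomp : π.comp Coprod.inr = 1 := by
          apply FreeGroup.ext_hom
          intro a
          cases a
          simpa using hπt
        intro x
        rw [hdecomp]
        show (π.comp Coprod.inr) (r x) = 1
        rw [hcomp]
        rfl
      have htopN : Nw = ⊤ := by
        rw [Subgroup.eq_top_iff']
        intro x
        exact (QuotientGroup.eq_one_iff _).1 (hall x)
      obtain ⟨x, y, hxy⟩ := hKL H (F w) hH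
      apply hxy
      have hone : ∀ q : Gtilde H (F w), q = 1 := by
        intro q
        obtain ⟨x, rfl⟩ := QuotientGroup.mk'_surjective Nw q
        exact (QuotientGroup.eq_one_iff _).2 (htopN ▸ Subgroup.mem_top x)
      rw [hone x, hone y]
    intro a b hab
    have h1 : natMap G w (a * b⁻¹) = 1 := by
      rw [map_mul, map_inv, hab, mul_inv_cancel]
    have := hker _ h1
    rwa [mul_inv_eq_one] at this
  · -- KL' → KL
    intro hKL' G _ w hG
    set n : ℤ := Multiplicative.toAdd (expSum G w) with hn
    have hwn : expSum G w = Multiplicative.ofAdd n := rfl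
    by_cases h1 : n = 1 ∨ n = -1
    · have hinj : Function.Injective (natMap G w) := by
        apply hKL' G w
        rcases h1 with h | h
        · left; rw [hwn, h]
        · right; rw [hwn, h]
      obtain ⟨x, y, hxy⟩ := hG
      exact ⟨natMap G w x, natMap G w y, fun h => hxy (hinj h)⟩
    · push_neg at h1
      obtain ⟨m, hm⟩ : ∃ m : ℕ, m = n.natAbs := ⟨_, rfl⟩
      have hm1 : m ≠ 1 := by
        intro h
        rw [h] at hm
        have h' := Int.natAbs_eq_iff.1 hm.symm
        simp only [Nat.cast_one] at h'
        rcases h' with h' | h'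
        · exact h1.1 h'
        · exact h1.2 h'
      set χ : GZ G →* Multiplicative (ZMod m) :=
        (AddMonoidHom.toMultiplicative (Int.castAddHom (ZMod m))).comp (expSum G) with hχ
      have hχw : χ w = 1 := by
        rw [hχ, MonoidHom.comp_apply, hwn]
        show Multiplicative.ofAdd ((n : ZMod m)) = 1
        rw [(ZMod.intCast_zmod_eq_zero_iff_dvd n m).2 (by rw [hm]; exact Int.natAbs_dvd.2 dvd_rfl)]
        rfl
      have hle : Subgroup.normalClosure ({w} : Set (GZ G)) ≤ χ.ker := by
        apply Subgroup.normalClosure_le_normal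
        intro x hx
        rw [Set.mem_singleton_iff] at hx
        subst hx
        exact hχw
      set χbar : Gtilde G w →* Multiplicative (ZMod m) :=
        QuotientGroup.lift _ χ hle with hχbar
      have hone : (1 : ZMod m) ≠ 0 := by
        by_cases hm0 : m = 0
        · subst hm0
          exact one_ne_zero
        · haveI : Fact (1 < m) := ⟨by omega⟩
          exact one_ne_zero
      refine ⟨QuotientGroup.mk (tGen G), 1, fun h => ?_⟩
      have : χbar (QuotientGroup.mk (tGen G)) = 1 := by rw [h]; simp
      rw [hχbar, QuotientGroup.lift_mk] at this
      have hexpt : expSum G (tGen G) = Multiplicative.ofAdd (1 : ℤ) := by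
        rw [expSum, tGen]
        show (Coprod.lift 1 (FreeGroup.lift fun _ => Multiplicative.ofAdd (1 : ℤ)))
          (Coprod.inr (FreeGroup.of ())) = _
        rw [Coprod.lift_apply_inr, FreeGroup.lift_apply_of]
      have hχt : χ (tGen G) = Multiplicative.ofAdd ((1 : ℤ) : ZMod m) := by
        rw [hχ, MonoidHom.comp_apply, hexpt]
        rfl
      rw [hχt] at this
      apply hone
      have := Multiplicative.ofAdd.injective this
      rw [Int.cast_one] at this
      exact this


end KLApp
end

section
/- Claim from the proof of Proposition 1: Let G and S be groups and w ∈ G ∗ ⟨t⟩∞ such that G̃ = (G ∗ ⟨t⟩∞)/⟨⟨w⟩⟩ is trivial. Let w' ∈ (G × S) ∗ ⟨t⟩∞ be the image of w under the homomorphism G ∗ ⟨t⟩∞ → (G × S) ∗ ⟨t⟩∞ induced by g ↦ (g, 1) and t ↦ t. Then the quotient ((G × S) ∗ ⟨t⟩∞)/⟨⟨w'⟩⟩ is isomorphic to S. -/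
open Monoid

/-- Claim from the proof of Proposition 1: if `G̃` is trivial and `w'` is the
image of `w` under the homomorphism `G ∗ ⟨t⟩∞ → (G × S) ∗ ⟨t⟩∞` induced by
`g ↦ (g, 1)` and `t ↦ t`, then `((G × S) ∗ ⟨t⟩∞)/⟨⟨w'⟩⟩ ≅ S`. -/
theorem quotient_iso_of_trivial (G S : Type*) [Group G] [Group S] (w : GZ G)
    (htriv : ∀ x : Gtilde G w, x = 1) :
    Nonempty
      (Gtilde (G × S) (Coprod.map (MonoidHom.inl G S) (MonoidHom.id _) w) ≃* S) := by
  set j : GZ G →* GZ (G × S) :=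
    Coprod.map (MonoidHom.inl G S) (MonoidHom.id (FreeGroup Unit)) with hj
  set w' : GZ (G × S) := j w with hw'
  set N : Subgroup (GZ (G × S)) := Subgroup.normalClosure {w'} with hN
  set π : GZ (G × S) →* Gtilde (G × S) w' := QuotientGroup.mk' N with hπ
  -- the composite G∗Z → (G×S)∗Z → quotient kills everything
  have hker : Subgroup.normalClosure {w} ≤ (π.comp j).ker := by
    apply Subgroup.normalClosure_le_normal
    intro x hx
    rcases hx with rfl
    simp only [SetLike.mem_coe, MonoidHom.mem_ker, MonoidHom.comp_apply]
    exact (QuotientGroup.eq_one_iff _).mpr (Subgroup.subset_normalClosure rfl)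
  have htrivh : ∀ x : GZ G, π (j x) = 1 := by
    intro x
    have h1 : π (j x) = QuotientGroup.lift _ (π.comp j) hker (QuotientGroup.mk x) := rfl
    rw [h1, htriv (QuotientGroup.mk x), map_one]
  -- the projection φ
  set φ : GZ (G × S) →* S := Coprod.lift (MonoidHom.snd G S) 1 with hφ
  have hφw' : φ w' = 1 := by
    have : φ.comp j = 1 := by
      apply Coprod.hom_ext <;> ext x <;>
        simp [hφ, hj]
    calc φ w' = (φ.comp j) w := rfl
      _ = 1 := by rw [this]; rfl
  have hkerφ : N ≤ φ.ker := by
    apply Subgroup.normalClosure_le_normal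
    intro x hx
    rcases hx with rfl
    simpa [MonoidHom.mem_ker] using hφw'
  set f : Gtilde (G × S) w' →* S := QuotientGroup.lift N φ hkerφ with hf
  set g : S →* Gtilde (G × S) w' :=
    π.comp (Coprod.inl.comp (MonoidHom.inr G S)) with hg
  have hfg : f.comp g = MonoidHom.id S := by
    ext s
    show f (π (Coprod.inl (1, s))) = s
    have : f (π (Coprod.inl (1, s))) = φ (Coprod.inl (1, s)) := rfl
    rw [this]
    simp [hφ]
  have hgf : g.comp f = MonoidHom.id (Gtilde (G × S) w') := by
    have key : (g.comp f).comp π = π := by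
      apply Coprod.hom_ext
      · ext p
        have hp : (Coprod.inl p : GZ (G × S)) = (Coprod.inl ((p.1, (1:S)) : G × S) : GZ (G × S)) * (Coprod.inl ((1,p.2) : G × S) : GZ (G × S)) := by
          rw [← map_mul]
          congr 1
          simp
        have h1 : π (Coprod.inl ((p.1, (1:S)) : G × S)) = 1 := by
          have := htrivh (Coprod.inl p.1)
          simpa [hj] using this
        have h2 : f (π ((Coprod.inl ((1, p.2) : G × S)) : GZ (G × S))) = p.2 := by
          have : f (π ((Coprod.inl ((1, p.2) : G × S)) : GZ (G × S)))
              = φ ((Coprod.inl ((1, p.2) : G × S)) : GZ (G × S)) := rfl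
          rw [this]; simp [hφ]
        simp only [MonoidHom.comp_apply, hp, map_mul, h1, one_mul, h2]
        simp [hg]
        exact (congrArg π (map_one (Coprod.inl : G × S →* GZ (G × S)))).trans (map_one π)
      · ext x
        have h1 : π (Coprod.inr (FreeGroup.of x)) = 1 := by
          have := htrivh (Coprod.inr (FreeGroup.of x))
          simpa [hj] using this
        simp only [MonoidHom.comp_apply, h1]
        simp
    apply MonoidHom.ext
    intro q
    refine QuotientGroup.induction_on q ?_
    intro x
    have := DFunLike.congr_fun key x
    exact this
  exact ⟨MonoidHom.toMulEquiv f g hgf hfg⟩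
end

section
/- Lemma 1 (first assertion): Let A and B be torsion-free groups and let u be an element of the free product A ∗ B not lying in (the image of) A. Then the subgroup of A ∗ B generated by A and u is the free product of A and the infinite cyclic group generated by u; equivalently, the homomorphism A ∗ ℤ → A ∗ B that restricts to the canonical inclusion on A and sends a generator t of the ℤ-factor to u is injective. -/
open Monoid

/-- Torsion-free monoid (the old Mathlib `Monoid.IsTorsionFree`, removed since). -/
def Monoid.IsTorsionFree (G : Type*) [Monoid G] : Prop :=
  ∀ g : G, g ≠ 1 → ¬IsOfFinOrder g

open Monoid Monoid.CoprodI

namespace L1Aux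

variable {ι : Type*} {G : ι → Type*} [∀ i, Group (G i)]

theorem head_ne_one : ∀ {i j} (w : NeWord G i j), w.head ≠ 1
  | _, _, .singleton _ h => h
  | _, _, .append w₁ _ _ => head_ne_one w₁

theorem last_ne_one : ∀ {i j} (w : NeWord G i j), w.last ≠ 1
  | _, _, .singleton _ h => h
  | _, _, .append _ _ w₂ => last_ne_one w₂

theorem inv_length {i j} (w : NeWord G i j) :
    w.inv.toList.length = w.toList.length := by
  induction w <;> simp [NeWord.inv, *]; omega

theorem eq_of_length_one {i j} (w : NeWord G i j) (h : w.toList.length = 1) :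
    i = j ∧ w.prod = CoprodI.of w.head := by
  obtain ⟨x, hx⟩ : ∃ x, w.toList = [x] := List.length_eq_one_iff.mp h
  have h1 : w.toList.head? = some x := by rw [hx]; rfl
  have h2 : w.toList.getLast? = some x := by rw [hx]; rfl
  rw [NeWord.toList_head?] at h1
  rw [NeWord.toList_getLast?] at h2
  obtain rfl : x = ⟨i, w.head⟩ := (Option.some_injective _ h1).symm
  have hij : i = j := (congrArg Sigma.fst ((Option.some_injective _ h2))).symm
  refine ⟨hij, ?_⟩
  show w.toWord.prod = _
  rw [Word.prod]
  have : w.toWord.toList = [⟨i, w.head⟩] := hx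
  rw [this]
  simp

theorem nword_prod_ne_one {i j} (w : NeWord G i j) : w.prod ≠ 1 := by
  classical
  intro h
  have : w.toWord = Word.empty := by
    have := Word.equiv (M := G) |>.symm.injective (a₁ := w.toWord) (a₂ := Word.empty) ?_
    · exact this
    · show w.toWord.prod = Word.prod Word.empty
      rw [Word.prod_empty]
      exact h
  exact w.toList_ne_nil (by rw [show w.toList = w.toWord.toList from rfl, this]; rfl)

/-- Splitting off the first letter of a `NeWord`. -/
theorem split_head : ∀ {i j} (w : NeWord G i j), w.toList.length = 1 ∨
    ∃ (k : ι) (_hk : k ≠ i) (w' : NeWord G k j),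
      w.prod = CoprodI.of w.head * w'.prod ∧ w'.last = w.last ∧
        w'.toList.length + 1 = w.toList.length := by
  intro i j w
  induction w with
  | singleton x h => left; rfl
  | append w₁ hne w₂ ih₁ ih₂ =>
    right
    rcases ih₁ with h1 | ⟨k, hk, w₁', hp, hl, hlen⟩
    · obtain ⟨rfl, hprod⟩ := eq_of_length_one w₁ h1
      refine ⟨_, hne.symm, w₂, ?_, rfl, ?_⟩
      · rw [NeWord.append_prod, hprod]; rfl
      · simp only [NeWord.toList, List.length_append]
        omega
    · refine ⟨k, hk, w₁'.append hne w₂, ?_, by simp, ?_⟩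
      · rw [NeWord.append_prod, NeWord.append_prod, hp, mul_assoc]; rfl
      · simp only [NeWord.toList, List.length_append] at *
        omega

theorem split_last {i j} (w : NeWord G i j) : w.toList.length = 1 ∨
    ∃ (k : ι) (_hk : k ≠ j) (w' : NeWord G i k),
      w.prod = w'.prod * CoprodI.of w.last ∧ w'.head = w.head ∧
        w'.toList.length + 1 = w.toList.length := by
  rcases split_head w.inv with h | ⟨k, hk, ρ, hp, hl, hlen⟩
  · left; rwa [inv_length] at h
  · right
    refine ⟨k, hk, ρ.inv, ?_, ?_, ?_⟩
    · have := congrArg (·⁻¹) hp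
      simp only [NeWord.inv_prod, inv_inv, mul_inv_rev, NeWord.inv_head] at this
      rw [this]
      simp
    · rw [NeWord.inv_head, hl, NeWord.inv_last, inv_inv]
    · rw [inv_length, ← inv_length w, ← hlen]

/-- First-middle-last decomposition of a nonempty word with equal endpoint indices. -/
theorem fml {i} (w : NeWord G i i) :
    w.prod = CoprodI.of w.head ∨
    ∃ (j k : ι) (_hj : j ≠ i) (_hk : k ≠ i) (m : NeWord G j k),
      w.prod = CoprodI.of w.head * m.prod * CoprodI.of w.last ∧
        m.toList.length + 2 = w.toList.length := by
  rcases split_head w with h | ⟨j, hj, w₁, hp, hl, hlen⟩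
  · exact Or.inl (eq_of_length_one w h).2
  · right
    rcases split_last w₁ with h1 | ⟨k, hk, m, hp1, hh1, hlen1⟩
    · exact absurd (eq_of_length_one w₁ h1).1 hj
    · refine ⟨j, k, hj, hk, m, ?_, by omega⟩
      rw [hp, hp1, hl, mul_assoc]

end L1Aux

namespace L1Aux

variable {ι : Type*} {G : ι → Type*} [∀ i, Group (G i)]

/-- Powers of a word whose endpoint indices differ. -/
theorem powQ {i j} (hij : i ≠ j) (c : NeWord G i j) :
    ∀ n : ℕ, 1 ≤ n → ∃ w : NeWord G i j, w.prod = c.prod ^ n := by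
  intro n hn
  induction n, hn using Nat.le_induction with
  | base => exact ⟨c, by simp⟩
  | succ n hn ih =>
    obtain ⟨w, hw⟩ := ih
    exact ⟨c.append hij.symm w, by rw [NeWord.append_prod, hw, pow_succ']⟩

/-- Powers of a word `b₁ ⬝ m ⬝ b₂` with non-cancelling seam. -/
theorem powP {i j k} (hj : j ≠ i) (hk : k ≠ i) (b₁ b₂ : G i) (h₁ : b₁ ≠ 1) (h₂ : b₂ ≠ 1)
    (m : NeWord G j k) (hseam : b₂ * b₁ ≠ 1) :
    ∀ n : ℕ, 1 ≤ n → ∃ w : NeWord G i i,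
      w.head = b₁ ∧ w.prod = (CoprodI.of b₁ * m.prod * CoprodI.of b₂) ^ n := by
  intro n hn
  induction n, hn using Nat.le_induction with
  | base =>
    refine ⟨((NeWord.singleton b₁ h₁).append hj.symm m).append hk (NeWord.singleton b₂ h₂),
      by simp, by simp⟩
  | succ n hn ih =>
    obtain ⟨w, hh, hw⟩ := ih
    refine ⟨((NeWord.singleton b₁ h₁).append hj.symm m).append hk
      (w.mulHead b₂ (by rw [hh]; exact hseam)), by simp, ?_⟩
    rw [pow_succ']
    simp only [NeWord.append_prod, NeWord.prod_singleton, NeWord.mulHead_prod, hw]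
    group

/-- Key lemma: positive powers of a word with equal endpoint indices are
represented by words with the same endpoint indices. -/
theorem powR (htf : ∀ i, Monoid.IsTorsionFree (G i)) :
    ∀ (N : ℕ) {i} (w : NeWord G i i), w.toList.length ≤ N →
      ∀ n : ℕ, 1 ≤ n → ∃ w' : NeWord G i i, w'.prod = w.prod ^ n := by
  intro N
  induction N with
  | zero =>
    intro i w hlen
    exact absurd (List.length_eq_zero_iff.mp (Nat.le_zero.mp hlen)) w.toList_ne_nil
  | succ N ih =>
    intro i w hlen n hn
    rcases fml w with hp | ⟨j, k, hj, hk, m, hp, hlenm⟩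
    · have hne : w.head ^ n ≠ 1 := by
        intro hpow
        have := htf i w.head (head_ne_one w)
        exact this (isOfFinOrder_iff_pow_eq_one.mpr ⟨n, hn, hpow⟩)
      exact ⟨NeWord.singleton (w.head ^ n) hne, by simp [hp, map_pow]⟩
    · by_cases hseam : w.last * w.head = 1
      · -- cancellation: w.prod = b₁ * m.prod * b₁⁻¹
        have hlast : w.last = w.head⁻¹ := by
          rw [eq_inv_iff_mul_eq_one]; exact hseam
        have hconj : w.prod ^ n = CoprodI.of w.head * m.prod ^ n * (CoprodI.of w.head)⁻¹ := by
          rw [hp, hlast, map_inv]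
          rw [conj_pow]
        obtain ⟨μ, hμ⟩ : ∃ μ : NeWord G j k, μ.prod = m.prod ^ n := by
          by_cases hjk : j = k
          · subst hjk
            exact ih m (by omega) n hn
          · exact powQ hjk m n hn
        refine ⟨((NeWord.singleton w.head (head_ne_one w)).append hj.symm μ).append hk
          (NeWord.singleton w.head⁻¹ (inv_ne_one.mpr (head_ne_one w))), ?_⟩
        rw [hconj, ← hμ]
        simp [mul_assoc]
      · obtain ⟨w', _, hw'⟩ := powP hj hk w.head w.last (head_ne_one w) (last_ne_one w) m hseam n hn
        exact ⟨w', by rw [hw', ← hp]⟩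

/-- Integer version of the key lemma. -/
theorem powRz (htf : ∀ i, Monoid.IsTorsionFree (G i)) {i} (w : NeWord G i i)
    (n : ℤ) (hn : n ≠ 0) : ∃ w' : NeWord G i i, w'.prod = w.prod ^ n := by
  rcases lt_or_gt_of_ne hn with h | h
  · obtain ⟨w', hw'⟩ := powR htf w.inv.toList.length w.inv le_rfl (-n).toNat (by omega)
    refine ⟨w', ?_⟩
    rw [hw', NeWord.inv_prod, ← zpow_natCast, Int.toNat_of_nonneg (by omega), inv_zpow', neg_neg]
  · obtain ⟨w', hw'⟩ := powR htf w.toList.length w le_rfl n.toNat (by omega)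
    refine ⟨w', ?_⟩
    rw [hw', ← zpow_natCast, Int.toNat_of_nonneg (by omega)]

end L1Aux

namespace L1Aux

theorem freeGroupUnit_zpow (ζ : FreeGroup Unit) :
    ∃ n : ℤ, ζ = FreeGroup.of () ^ n := by
  have h : ζ ∈ Subgroup.closure {FreeGroup.of ()} := by
    have := FreeGroup.closure_range_of Unit
    rw [show Set.range (FreeGroup.of : Unit → FreeGroup Unit) = {FreeGroup.of ()} by
      ext x
      constructor
      · rintro ⟨⟨⟩, rfl⟩; rfl
      · rintro rfl; exact ⟨(), rfl⟩] at this
    rw [this]; trivial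
  obtain ⟨n, hn⟩ := Subgroup.mem_closure_singleton.mp h
  exact ⟨n, hn.symm⟩

theorem freeGroupUnit_lift {G : Type*} [Group G] (c : G) (ζ : FreeGroup Unit) (hζ : ζ ≠ 1) :
    ∃ n : ℤ, n ≠ 0 ∧ FreeGroup.lift (fun _ => c) ζ = c ^ n := by
  obtain ⟨n, rfl⟩ := freeGroupUnit_zpow ζ
  refine ⟨n, ?_, ?_⟩
  · rintro rfl; simp at hζ
  · rw [map_zpow, FreeGroup.lift_apply_of]

end L1Aux

namespace L1Aux

universe u

/-- `down` as a monoid hom. -/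
def downHom : ULift (FreeGroup Unit) →* FreeGroup Unit where
  toFun := ULift.down
  map_one' := rfl
  map_mul' _ _ := rfl

/-- `up` as a monoid hom. -/
def upHom : FreeGroup Unit →* ULift (FreeGroup Unit) where
  toFun := ULift.up
  map_one' := rfl
  map_mul' _ _ := rfl

theorem fgu_ext {P : Type*} [Group P] (f g : FreeGroup Unit →* P)
    (h : f (FreeGroup.of ()) = g (FreeGroup.of ())) : f = g :=
  FreeGroup.ext_hom f g fun x => by cases x; exact h

theorem ulift_hom_ext {P : Type*} [Group P] (f g : ULift (FreeGroup Unit) →* P)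
    (h : f (ULift.up (FreeGroup.of ())) = g (ULift.up (FreeGroup.of ()))) : f = g := by
  have key := fgu_ext (f.comp upHom) (g.comp upHom) h
  ext x
  obtain ⟨ζ⟩ := x
  calc f ⟨ζ⟩ = (f.comp upHom) ζ := rfl
    _ = (g.comp upHom) ζ := by rw [key]
    _ = g ⟨ζ⟩ := rfl

variable (G : Bool → Type u) [∀ b, Group (G b)]

/-- The family `(A, ℤ)`. -/
def Hfam : Bool → Type u
  | true => G true
  | false => ULift (FreeGroup Unit)

instance : ∀ b, Group (Hfam G b)
  | true => inferInstanceAs (Group (G true))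
  | false => inferInstanceAs (Group (ULift (FreeGroup Unit)))

/-- Components of the evaluation map `A ∗ ℤ → A ∗ B`, `t ↦ v`. -/
def fam (v : CoprodI G) : ∀ b, Hfam G b →* CoprodI G
  | true => (CoprodI.of : G true →* CoprodI G)
  | false => (FreeGroup.lift fun _ => v).comp downHom

/-- The generator `t` inside `CoprodI (Hfam G)`. -/
def tG : CoprodI (Hfam G) :=
  CoprodI.of (M := Hfam G) (i := false) (ULift.up (FreeGroup.of ()))

/-- Components of the substitution `t ↦ α t α'` on `A ∗ ℤ`. -/
def psifam (α α' : G true) : ∀ b, Hfam G b →* CoprodI (Hfam G)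
  | true => (CoprodI.of : Hfam G true →* CoprodI (Hfam G))
  | false => (FreeGroup.lift fun _ =>
      CoprodI.of (M := Hfam G) (i := true) α * tG G * CoprodI.of (M := Hfam G) (i := true) α').comp
      downHom

variable {G}

@[simp] theorem psifam_true (α α' : G true) (a : Hfam G true) :
    psifam G α α' true a = CoprodI.of (M := Hfam G) (i := true) a := rfl

@[simp] theorem psifam_false_t (α α' : G true) :
    psifam G α α' false (ULift.up (FreeGroup.of ())) =
      CoprodI.of (M := Hfam G) (i := true) α * tG G *
        CoprodI.of (M := Hfam G) (i := true) α' := by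
  exact FreeGroup.lift_apply_of

theorem psifam_comp (α α' : G true) :
    (CoprodI.lift (psifam G α⁻¹ α'⁻¹)).comp (CoprodI.lift (psifam G α α')) =
      MonoidHom.id _ := by
  apply CoprodI.ext_hom
  intro b
  cases b
  · -- false component
    apply ulift_hom_ext
    show (CoprodI.lift (psifam G α⁻¹ α'⁻¹)) ((CoprodI.lift (psifam G α α'))
      (CoprodI.of (M := Hfam G) (i := false) (ULift.up (FreeGroup.of ())))) =
      CoprodI.of (M := Hfam G) (i := false) (ULift.up (FreeGroup.of ()))
    have h1 : (CoprodI.lift (psifam G α α')) (CoprodI.of (M := Hfam G) (i := false)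
        (ULift.up (FreeGroup.of ()))) = psifam G α α' false (ULift.up (FreeGroup.of ())) :=
      CoprodI.lift_of _ _
    erw [show ((CoprodI.lift (psifam G α α')) (CoprodI.of (M := Hfam G) (i := false)
        (ULift.up (FreeGroup.of ())))) = CoprodI.of (M := Hfam G) (i := true) α * tG G *
        CoprodI.of (M := Hfam G) (i := true) α' from h1.trans (psifam_false_t α α')]
    rw [map_mul, map_mul]
    erw [CoprodI.lift_of, CoprodI.lift_of, CoprodI.lift_of]
    erw [psifam_true α⁻¹ α'⁻¹, psifam_true α⁻¹ α'⁻¹, psifam_false_t α⁻¹ α'⁻¹]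
    show CoprodI.of (M := Hfam G) (i := true) α *
      (CoprodI.of (M := Hfam G) (i := true) α⁻¹ * tG G *
        CoprodI.of (M := Hfam G) (i := true) α'⁻¹) *
      CoprodI.of (M := Hfam G) (i := true) α' = tG G
    erw [← mul_assoc, ← mul_assoc, ← map_mul, mul_inv_cancel, map_one, one_mul,
      mul_assoc, ← map_mul, inv_mul_cancel, map_one, mul_one]
  · -- true component
    ext a
    simp only [MonoidHom.comp_apply, MonoidHom.id_apply, CoprodI.lift_of, psifam_true]

theorem psilift_injective (α α' : G true) :
    Function.Injective ⇑(CoprodI.lift (psifam G α α')) := by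
  intro x y h
  have := congrArg (⇑(CoprodI.lift (psifam G α⁻¹ α'⁻¹))) h
  rwa [← MonoidHom.comp_apply, ← MonoidHom.comp_apply, psifam_comp,
    MonoidHom.id_apply, MonoidHom.id_apply] at this

end L1Aux

namespace L1Aux

universe u
variable {G : Bool → Type u} [∀ b, Group (G b)]

@[simp] theorem fam_true (v : CoprodI G) (a : Hfam G true) :
    fam G v true a = CoprodI.of (M := G) (i := true) a := rfl

@[simp] theorem fam_false_t (v : CoprodI G) :
    fam G v false (ULift.up (FreeGroup.of ())) = v := by
  show (FreeGroup.lift fun _ => v) (FreeGroup.of ()) = v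
  exact FreeGroup.lift_apply_of

theorem img (htf : ∀ b, Monoid.IsTorsionFree (G b)) (v : NeWord G false false)
    {p q : Bool} (ω : NeWord (Hfam G) p q) :
    ∃ ν : NeWord G p q, ν.prod = CoprodI.lift (fam G v.prod) ω.prod := by
  induction ω with
  | @singleton b x hx =>
    cases b
    · -- false letter
      have hxd : x.down ≠ 1 := fun h => hx (ULift.ext x 1 h)
      obtain ⟨n, hn, hlift⟩ := freeGroupUnit_lift v.prod x.down hxd
      obtain ⟨ν, hν⟩ := powRz htf v n hn
      refine ⟨ν, ?_⟩
      rw [NeWord.prod_singleton]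
      erw [CoprodI.lift_of]
      show ν.prod = (FreeGroup.lift fun _ => v.prod) x.down
      rw [hlift, hν]
    · -- true letter
      refine ⟨NeWord.singleton x hx, ?_⟩
      erw [NeWord.prod_singleton, NeWord.prod_singleton]
      erw [CoprodI.lift_of]
      rfl
  | append w₁ hne w₂ ih₁ ih₂ =>
    obtain ⟨ν₁, h₁⟩ := ih₁
    obtain ⟨ν₂, h₂⟩ := ih₂
    exact ⟨ν₁.append hne ν₂,
      by rw [NeWord.append_prod, NeWord.append_prod, map_mul, h₁, h₂]⟩

theorem vlift_injective (htf : ∀ b, Monoid.IsTorsionFree (G b)) (v : NeWord G false false) :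
    Function.Injective ⇑(CoprodI.lift (fam G v.prod)) := by
  classical
  apply (injective_iff_map_eq_one _).mpr
  intro x hx
  by_contra hxne
  have hw : Word.equiv x ≠ Word.empty := by
    intro h
    apply hxne
    have := congrArg (Word.equiv (M := Hfam G)).symm h
    rw [Equiv.symm_apply_apply] at this
    rw [this]
    rfl
  obtain ⟨p, q, ω, hω⟩ := NeWord.of_word _ hw
  have hprod : ω.prod = x := by
    show ω.toWord.prod = x
    rw [hω]
    exact (Word.equiv (M := Hfam G)).symm_apply_apply x
  exact nword_prod_ne_one (img htf v ω).choose
    (by rw [(img htf v ω).choose_spec, hprod, hx])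

theorem main_coprodI (htfA : Monoid.IsTorsionFree (G true))
    (htfB : Monoid.IsTorsionFree (G false))
    (u : CoprodI G) (hu : ∀ a : G true, CoprodI.of a ≠ u) :
    Function.Injective ⇑(CoprodI.lift (fam G u)) := by
  classical
  have htf : ∀ b, Monoid.IsTorsionFree (G b) := by
    intro b; cases b; exacts [htfB, htfA]
  -- decompose u = α * v * α'
  have hune : u ≠ 1 := fun h => hu 1 (by rw [map_one, h])
  have hwne : Word.equiv u ≠ Word.empty := by
    intro h
    apply hune
    have := congrArg (Word.equiv (M := G)).symm h
    rw [Equiv.symm_apply_apply] at this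
    rw [this]; rfl
  obtain ⟨p, q, ω, hω⟩ := NeWord.of_word _ hwne
  have hprod : ω.prod = u := by
    show ω.toWord.prod = u
    rw [hω]
    exact (Word.equiv (M := G)).symm_apply_apply u
  obtain ⟨α, q', ω₁, h₁⟩ : ∃ (α : G true) (q' : Bool) (ω₁ : NeWord G false q'),
      u = CoprodI.of α * ω₁.prod := by
    cases p
    · exact ⟨1, q, ω, by rw [map_one, one_mul, hprod]⟩
    · rcases split_head ω with hlen | ⟨k, hk, ω₁, hp, -, -⟩
      · obtain ⟨-, h2⟩ := eq_of_length_one ω hlen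
        exact absurd (h2 ▸ hprod) (hu ω.head)
      · obtain rfl : k = false := Bool.eq_false_iff.mpr hk
        exact ⟨ω.head, q, ω₁, by rw [← hprod, hp]⟩
  obtain ⟨α', v, h₂⟩ : ∃ (α' : G true) (v : NeWord G false false),
      ω₁.prod = v.prod * CoprodI.of α' := by
    cases q'
    · exact ⟨1, ω₁, by rw [map_one, mul_one]⟩
    · rcases split_last ω₁ with hlen | ⟨k, hk, v, hp, -, -⟩
      · exact absurd (eq_of_length_one ω₁ hlen).1 (by simp)
      · obtain rfl : k = false := Bool.eq_false_iff.mpr hk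
        exact ⟨ω₁.last, v, hp⟩
  have huv : u = CoprodI.of α * v.prod * CoprodI.of α' := by
    rw [h₁, h₂, mul_assoc]
  -- the substitution trick
  have hcomp : CoprodI.lift (fam G u) =
      (CoprodI.lift (fam G v.prod)).comp (CoprodI.lift (psifam G α α')) := by
    apply CoprodI.ext_hom
    intro b
    cases b
    · apply ulift_hom_ext
      have e1 : ((CoprodI.lift (fam G u)).comp (CoprodI.of (M := Hfam G) (i := false)))
          (ULift.up (FreeGroup.of ())) = u := by
        erw [MonoidHom.comp_apply]
        erw [CoprodI.lift_of]
        exact fam_false_t u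
      have e2 : (((CoprodI.lift (fam G v.prod)).comp
            (CoprodI.lift (psifam G α α'))).comp (CoprodI.of (M := Hfam G) (i := false)))
          (ULift.up (FreeGroup.of ())) = u := by
        erw [MonoidHom.comp_apply, MonoidHom.comp_apply]
        erw [CoprodI.lift_of]
        rw [psifam_false_t, map_mul, map_mul]
        erw [CoprodI.lift_of, CoprodI.lift_of, CoprodI.lift_of]
        erw [fam_true (v := v.prod), fam_true (v := v.prod)]
        show CoprodI.of α * fam G v.prod false (ULift.up (FreeGroup.of ())) *
          CoprodI.of α' = u
        rw [fam_false_t, ← huv]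
      exact e1.trans e2.symm
    · ext a
      have t1 : (CoprodI.lift (fam G u)) (CoprodI.of (M := Hfam G) (i := true) a) =
          CoprodI.of (M := G) (i := true) a := by
        erw [CoprodI.lift_of]
      have t2 : ((CoprodI.lift (fam G v.prod)).comp (CoprodI.lift (psifam G α α')))
          (CoprodI.of (M := Hfam G) (i := true) a) =
          CoprodI.of (M := G) (i := true) a := by
        rw [MonoidHom.comp_apply]
        erw [CoprodI.lift_of]
      exact t1.trans t2.symm
  rw [hcomp, MonoidHom.coe_comp]
  exact (vlift_injective htf v).comp (psilift_injective α α')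

end L1Aux

namespace L1Aux

universe u v

def upHomG (M : Type*) [MulOneClass M] : M →* ULift M where
  toFun := ULift.up
  map_one' := rfl
  map_mul' _ _ := rfl

def downHomG (M : Type*) [MulOneClass M] : ULift M →* M where
  toFun := ULift.down
  map_one' := rfl
  map_mul' _ _ := rfl

variable (A : Type u) (B : Type v) [Group A] [Group B]

/-- The family `(A, B)` as a `Bool`-indexed family in one universe. -/
def Ffam : Bool → Type (max u v)
  | true => ULift.{v} A
  | false => ULift.{u} B

instance : ∀ b, Group (Ffam A B b)
  | true => inferInstanceAs (Group (ULift A))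
  | false => inferInstanceAs (Group (ULift B))

def toF : Coprod A B →* CoprodI (Ffam A B) :=
  Coprod.lift
    ((CoprodI.of : Ffam A B true →* CoprodI (Ffam A B)).comp (upHomG A))
    ((CoprodI.of : Ffam A B false →* CoprodI (Ffam A B)).comp (upHomG B))

def famF : ∀ b, Ffam A B b →* Coprod A B
  | true => (Coprod.inl : A →* Coprod A B).comp (downHomG A)
  | false => (Coprod.inr : B →* Coprod A B).comp (downHomG B)

def ofF : CoprodI (Ffam A B) →* Coprod A B := CoprodI.lift (famF A B)

theorem ofF_toF : (ofF A B).comp (toF A B) = MonoidHom.id _ := by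
  apply Coprod.hom_ext
  · ext a
    show (ofF A B) ((toF A B) (Coprod.inl a)) = Coprod.inl a
    rw [toF, Coprod.lift_apply_inl, ofF]; erw [MonoidHom.comp_apply]
    erw [CoprodI.lift_of]
  · ext b
    show (ofF A B) ((toF A B) (Coprod.inr b)) = Coprod.inr b
    rw [toF, Coprod.lift_apply_inr, ofF]; erw [MonoidHom.comp_apply]
    erw [CoprodI.lift_of]

theorem toF_ofF : (toF A B).comp (ofF A B) = MonoidHom.id _ := by
  apply CoprodI.ext_hom
  intro b
  cases b
  · ext x
    show (toF A B) ((ofF A B) (CoprodI.of (M := Ffam A B) (i := false) x)) = _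
    rw [ofF]
    erw [CoprodI.lift_of]
  · ext x
    show (toF A B) ((ofF A B) (CoprodI.of (M := Ffam A B) (i := true) x)) = _
    rw [ofF]
    erw [CoprodI.lift_of]

/-- The domain family `(A, ℤ)`. -/
def toH : Coprod A (FreeGroup Unit) →* CoprodI (Hfam (Ffam A B)) :=
  Coprod.lift
    ((CoprodI.of : Hfam (Ffam A B) true →* CoprodI (Hfam (Ffam A B))).comp (upHomG A))
    ((CoprodI.of : Hfam (Ffam A B) false →* CoprodI (Hfam (Ffam A B))).comp
      (upHomG (FreeGroup Unit)))

def famH : ∀ b, Hfam (Ffam A B) b →* Coprod A (FreeGroup Unit)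
  | true => (Coprod.inl : A →* Coprod A (FreeGroup Unit)).comp (downHomG A)
  | false => (Coprod.inr : FreeGroup Unit →* Coprod A (FreeGroup Unit)).comp
      (downHomG (FreeGroup Unit))

def ofH : CoprodI (Hfam (Ffam A B)) →* Coprod A (FreeGroup Unit) :=
  CoprodI.lift (famH A B)

theorem ofH_toH : (ofH A B).comp (toH A B) = MonoidHom.id _ := by
  apply Coprod.hom_ext
  · ext a
    show (ofH A B) ((toH A B) (Coprod.inl a)) = Coprod.inl a
    rw [toH, Coprod.lift_apply_inl, ofH]; erw [MonoidHom.comp_apply]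
    erw [CoprodI.lift_of]
  · apply fgu_ext
    show (ofH A B) ((toH A B) (Coprod.inr (FreeGroup.of ()))) = Coprod.inr (FreeGroup.of ())
    rw [toH, Coprod.lift_apply_inr, ofH]; erw [MonoidHom.comp_apply]
    erw [CoprodI.lift_of]

theorem ulift_torsionFree {M : Type*} [Group M] (h : Monoid.IsTorsionFree M) :
    Monoid.IsTorsionFree (ULift M) := by
  intro g hg hfin
  have hd : g.down ≠ 1 := fun hh => hg (ULift.ext g 1 hh)
  exact h g.down hd ((downHomG M).isOfFinOrder hfin)

end L1Aux

namespace L1Aux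
universe u v

theorem final (A : Type u) (B : Type v) [Group A] [Group B]
    (hA : Monoid.IsTorsionFree A) (hB : Monoid.IsTorsionFree B)
    (u : Coprod A B) (hu : u ∉ (Coprod.inl : A →* Coprod A B).range) :
    Function.Injective
      ⇑(Coprod.lift (Coprod.inl : A →* Coprod A B)
        (FreeGroup.lift fun _ : Unit => u)) := by
  classical
  set Φ := Coprod.lift (Coprod.inl : A →* Coprod A B) (FreeGroup.lift fun _ : Unit => u)
    with hΦ
  set ub := toF A B u with hubdef
  have e4 : (ofF A B) ub = u := DFunLike.congr_fun (ofF_toF A B) u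
  have hub : ∀ a : Ffam A B true, CoprodI.of a ≠ ub := by
    intro a h
    apply hu
    refine ⟨a.down, ?_⟩
    have h2 := congrArg (⇑(ofF A B)) h
    have e3 : (ofF A B) (CoprodI.of (M := Ffam A B) (i := true) a) = Coprod.inl a.down := by
      rw [ofF]; erw [CoprodI.lift_of]
    rw [e3, e4] at h2
    exact h2
  have hcomp : Φ = (ofF A B).comp
      ((CoprodI.lift (fam (Ffam A B) ub)).comp (toH A B)) := by
    apply Coprod.hom_ext
    · ext a
      have s1 : Φ (Coprod.inl a) = Coprod.inl a := by rw [hΦ, Coprod.lift_apply_inl]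
      have s2 : (toH A B) (Coprod.inl a) =
          CoprodI.of (M := Hfam (Ffam A B)) (i := true) (ULift.up a) := by
        rw [toH, Coprod.lift_apply_inl]; rfl
      have s3 : (CoprodI.lift (fam (Ffam A B) ub))
          (CoprodI.of (M := Hfam (Ffam A B)) (i := true) (ULift.up a)) =
          CoprodI.of (M := Ffam A B) (i := true) (ULift.up a) := by
        erw [CoprodI.lift_of]
      have s4 : (ofF A B) (CoprodI.of (M := Ffam A B) (i := true) (ULift.up a)) =
          Coprod.inl a := by
        rw [ofF]; erw [CoprodI.lift_of]
      show Φ (Coprod.inl a) =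
        (ofF A B) ((CoprodI.lift (fam (Ffam A B) ub)) ((toH A B) (Coprod.inl a)))
      rw [s1, s2, s3, s4]
    · apply fgu_ext
      have r1 : Φ (Coprod.inr (FreeGroup.of ())) = u := by
        rw [hΦ, Coprod.lift_apply_inr, FreeGroup.lift_apply_of]
      have r2 : (toH A B) (Coprod.inr (FreeGroup.of ())) =
          CoprodI.of (M := Hfam (Ffam A B)) (i := false) (ULift.up (FreeGroup.of ())) := by
        rw [toH, Coprod.lift_apply_inr]; rfl
      have r3 : (CoprodI.lift (fam (Ffam A B) ub))
          (CoprodI.of (M := Hfam (Ffam A B)) (i := false) (ULift.up (FreeGroup.of ()))) =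
          ub := by
        erw [CoprodI.lift_of]
        exact fam_false_t ub
      show Φ (Coprod.inr (FreeGroup.of ())) =
        (ofF A B) ((CoprodI.lift (fam (Ffam A B) ub))
          ((toH A B) (Coprod.inr (FreeGroup.of ()))))
      rw [r1, r2, r3, e4]
  have hinj1 : Function.Injective ⇑(ofF A B) := by
    intro x y h
    have := congrArg (⇑(toF A B)) h
    rwa [← MonoidHom.comp_apply, ← MonoidHom.comp_apply, toF_ofF,
      MonoidHom.id_apply, MonoidHom.id_apply] at this
  have hinj3 : Function.Injective ⇑(toH A B) := by
    intro x y h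
    have := congrArg (⇑(ofH A B)) h
    rwa [← MonoidHom.comp_apply, ← MonoidHom.comp_apply, ofH_toH,
      MonoidHom.id_apply, MonoidHom.id_apply] at this
  have hinj2 : Function.Injective ⇑(CoprodI.lift (fam (Ffam A B) ub)) :=
    main_coprodI (ulift_torsionFree hA) (ulift_torsionFree hB) ub hub
  rw [hcomp, MonoidHom.coe_comp, MonoidHom.coe_comp]
  exact hinj1.comp (hinj2.comp hinj3)

end L1Aux


/-- **Lemma 1, first assertion**: if `A` and `B` are torsion-free and
`u ∈ (A ∗ B) \ A`, then `⟨A, u⟩ = A ∗ ⟨u⟩∞`, i.e. the homomorphism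
`A ∗ ℤ → A ∗ B` restricting to the inclusion on `A` and sending `t` to `u` is
injective. -/
theorem lemma1_first (A B : Type*) [Group A] [Group B]
    (hA : Monoid.IsTorsionFree A) (hB : Monoid.IsTorsionFree B)
    (u : Coprod A B) (hu : u ∉ (Coprod.inl : A →* Coprod A B).range) :
    Function.Injective
      ⇑(Coprod.lift (Coprod.inl : A →* Coprod A B)
        (FreeGroup.lift fun _ : Unit => u)) := by
  exact L1Aux.final A B hA hB u hu
end
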